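/- arXiv:1904.04194 — 6 statements merged into one kernel-verified Lean document; each statement's English description precedes it below -/
import Mathlib

section
/- Let Δ ⊆ ℝ_{≥0}^n be a Newton polyhedron with a loose edge E whose endpoints are a, b ∈ ℝ_{≥0}^n. Then for every c ∈ Δ and every ξ ∈ ℝ_{≥0}^n satisfying ⟨ξ,a⟩ = ⟨ξ,b⟩, one has ⟨ξ,c⟩ ≥ ⟨ξ,a⟩. -/
open Finset Pointwise

def dotp {n : ℕ} (ξ a : Fin n → ℝ) : ℝ := ∑ i, ξ i * a i

def IsNewtonPolyhedron {n : ℕ} (Δ : Set (Fin n → ℝ)) : Prop :=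
  ∃ S : Finset (Fin n → ℝ), S.Nonempty ∧ (∀ a ∈ S, ∀ i, ∃ m : ℕ, a i = (m : ℝ)) ∧
    Δ = {x | ∃ y ∈ convexHull ℝ (S : Set (Fin n → ℝ)),
          ∃ z : Fin n → ℝ, (∀ i, 0 ≤ z i) ∧ x = y + z}

def NPface {n : ℕ} (Δ : Set (Fin n → ℝ)) (ξ : Fin n → ℝ) : Set (Fin n → ℝ) :=
  {a ∈ Δ | ∀ b ∈ Δ, dotp ξ a ≤ dotp ξ b}

/-- `A` is a face of `Δ` (cut out by some `ξ ∈ ℝ_{≥0}ⁿ`). -/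
def IsFaceOf {n : ℕ} (Δ A : Set (Fin n → ℝ)) : Prop :=
  ∃ ξ : Fin n → ℝ, (∀ i, 0 ≤ ξ i) ∧ A = NPface Δ ξ

/-- Dimension of a subset of `ℝⁿ`: the rank of its vector span. -/
noncomputable def npDim {n : ℕ} (A : Set (Fin n → ℝ)) : ℕ :=
  Module.finrank ℝ (vectorSpan ℝ A)

/-- A loose edge: a compact 1-dimensional face not contained in any compact
face of dimension ≥ 2. -/
def IsLooseEdge {n : ℕ} (Δ E : Set (Fin n → ℝ)) : Prop :=
  IsFaceOf Δ E ∧ IsCompact E ∧ npDim E = 1 ∧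
    ∀ F, IsFaceOf Δ F → IsCompact F → 2 ≤ npDim F → ¬ E ⊆ F

lemma dotp_add {n : ℕ} (ξ x y : Fin n → ℝ) : dotp ξ (x + y) = dotp ξ x + dotp ξ y := by
  simp [dotp, mul_add, Finset.sum_add_distrib]

lemma dotp_sub {n : ℕ} (ξ x y : Fin n → ℝ) : dotp ξ (x - y) = dotp ξ x - dotp ξ y := by
  simp [dotp, mul_sub, Finset.sum_sub_distrib]

lemma dotp_smul {n : ℕ} (ξ : Fin n → ℝ) (c : ℝ) (x : Fin n → ℝ) :
    dotp ξ (c • x) = c * dotp ξ x := by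
  simp only [dotp, Pi.smul_apply, smul_eq_mul, Finset.mul_sum]
  exact Finset.sum_congr rfl fun i _ => by ring

lemma dotp_nonneg {n : ℕ} {ξ x : Fin n → ℝ} (hξ : ∀ i, 0 ≤ ξ i) (hx : ∀ i, 0 ≤ x i) :
    0 ≤ dotp ξ x :=
  Finset.sum_nonneg fun i _ => mul_nonneg (hξ i) (hx i)

lemma dotp_isLinearMap {n : ℕ} (ξ : Fin n → ℝ) : IsLinearMap ℝ (dotp ξ) :=
  ⟨fun x y => dotp_add ξ x y, fun c x => dotp_smul ξ c x⟩

lemma dotp_combo {n : ℕ} (t : ℝ) (η ξ x : Fin n → ℝ) :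
    dotp (fun i => (1 - t) * η i + t * ξ i) x = (1 - t) * dotp η x + t * dotp ξ x := by
  simp [dotp, add_mul, Finset.sum_add_distrib, Finset.mul_sum, mul_assoc]

lemma dotp_segment {n : ℕ} {ζ a b x : Fin n → ℝ} (hx : x ∈ segment ℝ a b)
    (hab : dotp ζ a = dotp ζ b) : dotp ζ x = dotp ζ a := by
  obtain ⟨u, v, hu, hv, huv, rfl⟩ := hx
  rw [dotp_add, dotp_smul, dotp_smul, ← hab, ← add_mul, huv, one_mul]

lemma dotp_continuous {n : ℕ} (ξ : Fin n → ℝ) : Continuous (dotp ξ) := by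
  unfold dotp
  exact continuous_finset_sum _ fun i _ => continuous_const.mul (continuous_apply i)

/-- if `E` is a loose edge with endpoints `a`, `b`, then for every
`c ∈ Δ` and every `ξ ∈ ℝ_{≥0}ⁿ` with `⟨ξ,a⟩ = ⟨ξ,b⟩`, one has `⟨ξ,c⟩ ≥ ⟨ξ,a⟩`. -/
theorem loose_edge_min {n : ℕ} (Δ E : Set (Fin n → ℝ)) (hΔ : IsNewtonPolyhedron Δ)
    (hE : IsLooseEdge Δ E) (a b : Fin n → ℝ) (hab : a ≠ b) (hseg : E = segment ℝ a b) :
    ∀ c ∈ Δ, ∀ ξ : Fin n → ℝ, (∀ i, 0 ≤ ξ i) → dotp ξ a = dotp ξ b →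
      dotp ξ a ≤ dotp ξ c := by
  obtain ⟨S, hSne, hSnat, hΔeq⟩ := hΔ
  obtain ⟨⟨η, hη0, hEface⟩, hEcomp, hEdim, hloose⟩ := hE
  intro c hc ξ hξ0 hξab
  by_contra hcon
  push_neg at hcon
  -- basic facts
  have hSsubΔ : ∀ s ∈ S, s ∈ Δ := by
    intro s hs
    rw [hΔeq]
    exact ⟨s, subset_convexHull ℝ _ hs, 0, fun i => le_rfl, by simp⟩
  have hΔnonneg : ∀ x ∈ Δ, ∀ i, 0 ≤ x i := by
    intro x hx
    rw [hΔeq] at hx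
    obtain ⟨y, hy, z, hz, rfl⟩ := hx
    have hconv : Convex ℝ {x : Fin n → ℝ | ∀ i, 0 ≤ x i} := by
      have he : {x : Fin n → ℝ | ∀ i, 0 ≤ x i} = ⋂ i, {x | 0 ≤ x i} := by
        ext x; simp
      rw [he]
      exact convex_iInter fun i =>
        convex_halfSpace_ge ⟨fun u v => rfl, fun c u => rfl⟩ 0
    have hy0 : ∀ i, 0 ≤ y i := by
      refine convexHull_min ?_ hconv hy
      intro s hs i
      obtain ⟨m, hm⟩ := hSnat s hs i
      rw [hm]; positivity
    intro i
    have := hy0 i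
    have := hz i
    simp only [Pi.add_apply]
    linarith
  have hminΔ : ∀ ζ : Fin n → ℝ, (∀ i, 0 ≤ ζ i) →
      ∃ s ∈ S, ∀ x ∈ Δ, dotp ζ s ≤ dotp ζ x := by
    intro ζ hζ
    obtain ⟨s, hs, hmin⟩ := S.exists_min_image (dotp ζ) hSne
    refine ⟨s, hs, fun x hx => ?_⟩
    rw [hΔeq] at hx
    obtain ⟨y, hy, z, hz, rfl⟩ := hx
    have h1 : dotp ζ s ≤ dotp ζ y :=
      convexHull_min (fun u hu => hmin u hu) (convex_halfSpace_ge (dotp_isLinearMap ζ) _) hy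
    have h2 : 0 ≤ dotp ζ z := dotp_nonneg hζ hz
    rw [dotp_add]; linarith
  have haE : a ∈ E := by rw [hseg]; exact left_mem_segment ℝ a b
  have hbE : b ∈ E := by rw [hseg]; exact right_mem_segment ℝ a b
  have hEsubΔ : E ⊆ Δ := by rw [hEface]; exact fun x hx => hx.1
  have haΔ : a ∈ Δ := hEsubΔ haE
  have hbΔ : b ∈ Δ := hEsubΔ hbE
  have haF : a ∈ NPface Δ η := by rw [← hEface]; exact haE
  have hbF : b ∈ NPface Δ η := by rw [← hEface]; exact hbE
  have hamin : ∀ x ∈ Δ, dotp η a ≤ dotp η x := haF.2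
  have hηab : dotp η a = dotp η b := le_antisymm (haF.2 b hbΔ) (hbF.2 a haΔ)
  -- strict positivity of η
  have hηpos : ∀ i, 0 < η i := by
    intro i
    rcases (hη0 i).lt_or_eq with h | h
    · exact h
    exfalso
    set e : Fin n → ℝ := fun j => if j = i then 1 else 0 with he
    have hdotpe : dotp η e = η i := by
      simp [dotp, he, mul_ite]
    have hkey : ∀ t : ℝ, 0 ≤ t → a + t • e ∈ E := by
      intro t ht
      rw [hEface]
      refine ⟨?_, ?_⟩
      · rw [hΔeq] at haΔ ⊢
        obtain ⟨y, hy, z, hz, hzeq⟩ := haΔ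
        refine ⟨y, hy, z + t • e, fun j => ?_, by rw [hzeq]; abel⟩
        have : (0:ℝ) ≤ t * e j := by
          by_cases hj : j = i <;> simp [he, hj, ht]
        have := hz j
        simp only [Pi.add_apply, Pi.smul_apply, smul_eq_mul]
        linarith
      · intro x hx
        have hval : dotp η (a + t • e) = dotp η a := by
          rw [dotp_add, dotp_smul, hdotpe, ← h]; ring
        rw [hval]; exact hamin x hx
    obtain ⟨C, hC⟩ := Metric.isBounded_iff.mp hEcomp.isBounded
    set t : ℝ := max C 0 + 1 with htdef
    have ht : 0 ≤ t := by positivity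
    have hmem := hkey t ht
    have hd : dist (a i) ((a + t • e) i) ≤ dist a (a + t • e) := dist_le_pi_dist a (a + t • e) i
    have hco : (a + t • e) i = a i + t := by simp [he]
    have h1 : dist a (a + t • e) ≤ C := hC haE hmem
    rw [hco, Real.dist_eq] at hd
    have : |a i - (a i + t)| = t := by
      rw [abs_sub_comm]; simp [abs_of_nonneg ht]
    rw [this] at hd
    have : t ≤ C := le_trans hd h1
    have : C ≤ max C 0 := le_max_left C 0
    linarith
  -- construction of the critical direction
  obtain ⟨s₀, hs₀S, hs₀min⟩ := hminΔ ξ hξ0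
  have hs₀lt : dotp ξ s₀ < dotp ξ a := lt_of_le_of_lt (hs₀min c hc) hcon
  set S' := S.filter (fun s => dotp ξ s < dotp ξ a) with hS'
  have hS'ne : S'.Nonempty := ⟨s₀, Finset.mem_filter.mpr ⟨hs₀S, hs₀lt⟩⟩
  obtain ⟨s₁, hs₁S', hs₁min⟩ := S'.exists_min_image
    (fun s => (dotp η s - dotp η a) / ((dotp η s - dotp η a) + (dotp ξ a - dotp ξ s))) hS'ne
  have hs₁S : s₁ ∈ S := (Finset.mem_filter.mp hs₁S').1
  have hs₁lt : dotp ξ s₁ < dotp ξ a := by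
    have := (Finset.mem_filter.mp hs₁S').2
    simpa using this
  have hA₁ : 0 ≤ dotp η s₁ - dotp η a := by
    have := hamin s₁ (hSsubΔ s₁ hs₁S); linarith
  have hden : 0 < (dotp η s₁ - dotp η a) + (dotp ξ a - dotp ξ s₁) := by linarith
  obtain ⟨t, ht0, ht1, hkeyt, hPt'⟩ :
      ∃ t : ℝ, 0 ≤ t ∧ t < 1 ∧
        t * ((dotp η s₁ - dotp η a) + (dotp ξ a - dotp ξ s₁)) = dotp η s₁ - dotp η a ∧
        ∀ s ∈ S, dotp ξ s < dotp ξ a →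
          t * ((dotp η s - dotp η a) + (dotp ξ a - dotp ξ s)) ≤ dotp η s - dotp η a := by
    refine ⟨(dotp η s₁ - dotp η a) / ((dotp η s₁ - dotp η a) + (dotp ξ a - dotp ξ s₁)),
      div_nonneg hA₁ hden.le, ?_, div_mul_cancel₀ _ (ne_of_gt hden), ?_⟩
    · rw [div_lt_one hden]; linarith
    · intro s hs hslt
      have hAs : 0 ≤ dotp η s - dotp η a := by
        have := hamin s (hSsubΔ s hs); linarith
      have hdens : 0 < (dotp η s - dotp η a) + (dotp ξ a - dotp ξ s) := by linarith
      have htle := hs₁min s (Finset.mem_filter.mpr ⟨hs, hslt⟩)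
      rw [div_le_div_iff₀ hden hdens] at htle
      rw [div_mul_eq_mul_div, div_le_iff₀ hden]
      linarith
  set ζ : Fin n → ℝ := fun i => (1 - t) * η i + t * ξ i with hζdef
  have hζcombo : ∀ x, dotp ζ x = (1 - t) * dotp η x + t * dotp ξ x := fun x =>
    dotp_combo t η ξ x
  have hζ0 : ∀ i, 0 ≤ ζ i := fun i =>
    add_nonneg (mul_nonneg (by linarith) (hη0 i)) (mul_nonneg ht0 (hξ0 i))
  have hζpos : ∀ i, 0 < ζ i :=
    fun i => lt_of_lt_of_le (mul_pos (by linarith) (hηpos i))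
      (le_add_of_nonneg_right (mul_nonneg ht0 (hξ0 i)))
  -- a minimizes ζ over S
  have hPt : ∀ s ∈ S, dotp ζ a ≤ dotp ζ s := by
    intro s hs
    rw [hζcombo, hζcombo]
    have hAs : 0 ≤ dotp η s - dotp η a := by
      have := hamin s (hSsubΔ s hs); linarith
    by_cases hsS' : dotp ξ s < dotp ξ a
    · have hstep := hPt' s hs hsS'
      nlinarith
    · push_neg at hsS'
      nlinarith [mul_nonneg (show (0:ℝ) ≤ 1 - t by linarith) hAs,
        mul_nonneg ht0 (show (0:ℝ) ≤ dotp ξ s - dotp ξ a by linarith)]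
  -- a minimizes ζ over Δ
  have haminζ : ∀ x ∈ Δ, dotp ζ a ≤ dotp ζ x := by
    obtain ⟨s₂, hs₂S, hs₂min⟩ := hminΔ ζ hζ0
    exact fun x hx => le_trans (hPt s₂ hs₂S) (hs₂min x hx)
  have hζab : dotp ζ a = dotp ζ b := by
    rw [hζcombo, hζcombo, hηab, hξab]
  -- s₁ achieves the same minimum
  have hs₁eq : dotp ζ s₁ = dotp ζ a := by
    rw [hζcombo, hζcombo]; nlinarith
  -- the face F
  have haFζ : a ∈ NPface Δ ζ := ⟨haΔ, haminζ⟩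
  have hbFζ : b ∈ NPface Δ ζ := ⟨hbΔ, fun y hy => hζab ▸ haminζ y hy⟩
  have hs₁Fζ : s₁ ∈ NPface Δ ζ :=
    ⟨hSsubΔ s₁ hs₁S, fun y hy => hs₁eq ▸ haminζ y hy⟩
  have hEFζ : E ⊆ NPface Δ ζ := by
    intro x hx
    have hxseg : x ∈ segment ℝ a b := by rw [← hseg]; exact hx
    refine ⟨hEsubΔ hx, fun y hy => ?_⟩
    rw [dotp_segment hxseg hζab]
    exact haminζ y hy
  -- F is closed
  have hΔclosed : IsClosed Δ := by
    have hsum : Δ = convexHull ℝ (S : Set (Fin n → ℝ)) + {z : Fin n → ℝ | ∀ i, 0 ≤ z i} := by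
      rw [hΔeq]
      ext x
      simp only [Set.mem_add, Set.mem_setOf_eq]
      constructor
      · rintro ⟨y, hy, z, hz, rfl⟩; exact ⟨y, hy, z, hz, rfl⟩
      · rintro ⟨y, hy, z, hz, rfl⟩; exact ⟨y, hy, z, hz, rfl⟩
    rw [hsum]
    have hclosed : IsClosed {z : Fin n → ℝ | ∀ i, 0 ≤ z i} := by
      have he : {z : Fin n → ℝ | ∀ i, 0 ≤ z i} = ⋂ i, {z | 0 ≤ z i} := by ext z; simp
      rw [he]
      exact isClosed_iInter fun i => isClosed_le continuous_const (continuous_apply i)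
    exact hclosed.add_left_of_isCompact (S.finite_toSet.isCompact_convexHull ℝ)
  have hFclosed : IsClosed (NPface Δ ζ) := by
    have he : NPface Δ ζ = Δ ∩ ⋂ y ∈ Δ, {x | dotp ζ x ≤ dotp ζ y} := by
      ext x
      simp only [NPface, Set.mem_setOf_eq, Set.mem_inter_iff, Set.mem_iInter]
    rw [he]
    exact hΔclosed.inter (isClosed_biInter fun y hy =>
      isClosed_le (dotp_continuous ζ) continuous_const)
  -- F is bounded, hence compact
  have hFcompact : IsCompact (NPface Δ ζ) := by
    refine IsCompact.of_isClosed_subset (isCompact_Icc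
      (a := (0 : Fin n → ℝ)) (b := fun i => dotp ζ a / ζ i)) hFclosed ?_
    intro x hx
    have hx0 : ∀ i, 0 ≤ x i := hΔnonneg x hx.1
    constructor
    · intro i; simpa using hx0 i
    · intro i
      have h1 : ζ i * x i ≤ dotp ζ x :=
        Finset.single_le_sum (fun j _ => mul_nonneg (hζ0 j) (hx0 j)) (Finset.mem_univ i)
      have h2 : dotp ζ x ≤ dotp ζ a := hx.2 a haΔ
      show x i ≤ dotp ζ a / ζ i
      rw [le_div_iff₀ (hζpos i)]
      nlinarith
  -- F has dimension ≥ 2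
  have hdim : 2 ≤ npDim (NPface Δ ζ) := by
    have hu : b - a ∈ vectorSpan ℝ (NPface Δ ζ) := vsub_mem_vectorSpan ℝ hbFζ haFζ
    have hv : s₁ - a ∈ vectorSpan ℝ (NPface Δ ζ) := vsub_mem_vectorSpan ℝ hs₁Fζ haFζ
    have hind : LinearIndependent ℝ ![b - a, s₁ - a] := by
      rw [LinearIndependent.pair_iff]
      intro α β hαβ
      have h1 : dotp ξ (α • (b - a) + β • (s₁ - a)) = 0 := by
        rw [hαβ]; simp [dotp]
      rw [dotp_add, dotp_smul, dotp_smul, dotp_sub, dotp_sub] at h1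
      have hβ : β = 0 := by
        rcases mul_eq_zero.mp (show β * (dotp ξ s₁ - dotp ξ a) = 0 by
          rw [← hξab] at h1; nlinarith) with h | h
        · exact h
        · exfalso; linarith
      subst hβ
      have hα : α • (b - a) = 0 := by
        have := hαβ; simpa using this
      rcases smul_eq_zero.mp hα with h | h
      · exact ⟨h, rfl⟩
      · exact absurd (sub_eq_zero.mp h) (Ne.symm hab)
    have hspan : Submodule.span ℝ (Set.range ![b - a, s₁ - a]) ≤
        vectorSpan ℝ (NPface Δ ζ) := by
      rw [Submodule.span_le]
      rintro x ⟨i, rfl⟩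
      fin_cases i
      · simpa using hu
      · simpa using hv
    have hcard : Module.finrank ℝ (Submodule.span ℝ (Set.range ![b - a, s₁ - a])) = 2 := by
      rw [finrank_span_eq_card hind, Fintype.card_fin]
    unfold npDim
    rw [← hcard]
    exact Submodule.finrank_mono hspan
  exact hloose (NPface Δ ζ) ⟨ζ, hζ0, rfl⟩ hFcompact hdim hEFζ
end

section
/- Let c ∈ ℤ^n be a point having at least one strictly positive coordinate and at least one strictly negative coordinate. Then there exists a basis ξ_1, …, ξ_n of ℝ^n such that every ξ_i has all coordinates in ℤ_{≥0}, and ⟨ξ_i, c⟩ = 0 for i = 1, …, n−1. -/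
open Finset

/-- auxiliary vector: for each coordinate `k`, a vector with nonnegative integer
entries orthogonal to `c`, supported in `{k, p, q}`. -/
noncomputable def wvec {n : ℕ} (c : Fin n → ℤ) (p q : Fin n) (k : Fin n) : Fin n → ℝ :=
  fun j =>
    if c k = 0 then (if j = k then 1 else 0)
    else if 0 < c k then
      (if j = k then ((-c q : ℤ) : ℝ) else 0) + (if j = q then ((c k : ℤ) : ℝ) else 0)
    else
      (if j = k then ((c p : ℤ) : ℝ) else 0) + (if j = p then ((-c k : ℤ) : ℝ) else 0)

noncomputable def uvec {n : ℕ} (c : Fin n → ℤ) (p q : Fin n) (k : Fin n) : Fin n → ℝ :=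
  if k = p then (fun j => if j = p then 1 else 0) else wvec c p q k

lemma wvec_dot {n : ℕ} (c : Fin n → ℤ) (p q : Fin n) (k : Fin n) :
    dotp (wvec c p q k) (fun j => (c j : ℝ)) = 0 := by
  unfold dotp wvec
  by_cases h0 : c k = 0
  · simp [h0]
  · by_cases h1 : 0 < c k
    · simp only [h0, h1, if_true, if_false, add_mul, Finset.sum_add_distrib, ite_mul,
        zero_mul, Finset.sum_ite_eq', Finset.mem_univ, if_true]
      push_cast
      ring
    · simp only [h0, h1, if_false, add_mul, Finset.sum_add_distrib, ite_mul,
        zero_mul, Finset.sum_ite_eq', Finset.mem_univ, if_true]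
      push_cast
      ring

/-- if `c ∈ ℤⁿ` has a positive and a negative coordinate, then there is
a basis `ξ_1, …, ξ_n` of `ℝⁿ` with nonnegative integer entries such that
`⟨ξ_i, c⟩ = 0` for `i = 1, …, n-1`. -/
theorem exists_nonneg_integer_basis_orthogonal {n : ℕ} (c : Fin n → ℤ)
    (hpos : ∃ i, 0 < c i) (hneg : ∃ j, c j < 0) :
    ∃ ξ : Fin n → (Fin n → ℝ), LinearIndependent ℝ ξ ∧
      (∀ i k, ∃ m : ℕ, ξ i k = (m : ℝ)) ∧
      (∀ i : Fin n, (i : ℕ) < n - 1 → dotp (ξ i) (fun k => (c k : ℝ)) = 0) := by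
  classical
  obtain ⟨p, hp⟩ := hpos
  obtain ⟨q, hq⟩ := hneg
  have hpq : p ≠ q := by
    rintro rfl; omega
  have hn : 0 < n := p.pos
  set last : Fin n := ⟨n - 1, by omega⟩ with hlast
  set σ : Equiv.Perm (Fin n) := Equiv.swap last p with hσ
  -- key facts about entries of uvec
  have hu_pp : ∀ j, uvec c p q p j = if j = p then 1 else 0 := by
    intro j; simp [uvec]
  have hu_ne : ∀ k, k ≠ p → uvec c p q k = wvec c p q k := by
    intro k hk; simp [uvec, hk]
  -- entry at its own index is positive
  have hdiag : ∀ k, k ≠ p → k ≠ q → (0 : ℝ) < wvec c p q k k := by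
    intro k hkp hkq
    unfold wvec
    by_cases h0 : c k = 0
    · simp [h0]
    · by_cases h1 : 0 < c k
      · simp only [h0, h1, if_true, if_false, hkq]
        push_cast
        simp [hkq]
        omega
      · simp only [h0, h1, if_false, hkp]
        push_cast
        simp [hkp]
        omega
  -- w k vanishes at coordinates outside {k, p, q}
  have hoff : ∀ k j, j ≠ k → j ≠ p → j ≠ q → wvec c p q k j = 0 := by
    intro k j hjk hjp hjq
    unfold wvec
    split_ifs <;> simp [hjk, hjp, hjq]
  have hqq : wvec c p q q q = ((c p : ℤ) : ℝ) := by
    unfold wvec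
    have h0 : ¬ (c q = 0) := by omega
    have h1 : ¬ (0 < c q) := by omega
    simp [h0, h1, hpq.symm]
  -- linear independence of uvec
  have hu : LinearIndependent ℝ (uvec c p q) := by
    rw [Fintype.linearIndependent_iff]
    intro g hg
    have hg' : ∀ j, (∑ k, g k * uvec c p q k j) = 0 := by
      intro j
      have := congrFun hg j
      simpa [Finset.sum_apply] using this
    -- step 1: coordinates other than p, q
    have step1 : ∀ k, k ≠ p → k ≠ q → g k = 0 := by
      intro k hkp hkq
      have h := hg' k
      rw [Finset.sum_eq_single k] at h
      · have := hdiag k hkp hkq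
        rw [hu_ne k hkp] at h
        rcases mul_eq_zero.mp h with h' | h'
        · exact h'
        · exact absurd h' (ne_of_gt this)
      · intro m _ hmk
        by_cases hmp : m = p
        · subst hmp
          rw [hu_pp]
          simp [hkp]
        · rw [hu_ne m hmp, hoff m k (Ne.symm hmk) hkp hkq]
          ring
      · intro h; exact absurd (Finset.mem_univ k) h
    -- step 2: g q = 0
    have step2 : g q = 0 := by
      have h := hg' q
      rw [Finset.sum_eq_single q] at h
      · rw [hu_ne q (Ne.symm hpq), hqq] at h
        rcases mul_eq_zero.mp h with h' | h'
        · exact h'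
        · exfalso
          have : (0 : ℝ) < ((c p : ℤ) : ℝ) := by exact_mod_cast hp
          rw [h'] at this; exact lt_irrefl 0 this
      · intro m _ hmq
        by_cases hmp : m = p
        · subst hmp
          rw [hu_pp]
          simp [Ne.symm hpq]
        · rw [step1 m hmp hmq]; ring
      · intro h; exact absurd (Finset.mem_univ q) h
    -- step 3: g p = 0
    have step3 : g p = 0 := by
      have h := hg' p
      rw [Finset.sum_eq_single p] at h
      · rw [hu_pp] at h
        simpa using h
      · intro m _ hmp
        by_cases hmq : m = q
        · subst hmq; rw [step2]; ring
        · rw [step1 m hmp hmq]; ring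
      · intro h; exact absurd (Finset.mem_univ p) h
    intro i
    by_cases hip : i = p
    · subst hip; exact step3
    · by_cases hiq : i = q
      · subst hiq; exact step2
      · exact step1 i hip hiq
  refine ⟨uvec c p q ∘ σ, hu.comp σ σ.injective, ?_, ?_⟩
  · -- nonnegative integer entries
    intro i k
    simp only [Function.comp_apply]
    set m := σ i with hm
    by_cases hmp : m = p
    · rw [hmp, hu_pp]
      by_cases hkp : k = p
      · exact ⟨1, by simp [hkp]⟩
      · exact ⟨0, by simp [hkp]⟩
    · rw [hu_ne m hmp]
      unfold wvec
      by_cases h0 : c m = 0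
      · by_cases hkm : k = m
        · exact ⟨1, by simp [h0, hkm]⟩
        · exact ⟨0, by simp [h0, hkm]⟩
      · by_cases h1 : 0 < c m
        · simp only [h0, h1, if_true, if_false]
          by_cases hkm : k = m
          · have hkq : ¬ (k = q) := by
              intro hkq
              rw [hkm] at hkq
              rw [hkq] at h1
              omega
            refine ⟨(-c q).toNat, ?_⟩
            rw [if_pos hkm, if_neg hkq, add_zero]
            exact_mod_cast (Int.toNat_of_nonneg (show (0:ℤ) ≤ -c q by omega)).symm
          · by_cases hkq : k = q
            · refine ⟨(c m).toNat, ?_⟩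
              rw [if_neg hkm, if_pos hkq, zero_add]
              exact_mod_cast (Int.toNat_of_nonneg (show (0:ℤ) ≤ c m by omega)).symm
            · exact ⟨0, by simp [hkm, hkq]⟩
        · simp only [h0, h1, if_false]
          by_cases hkm : k = m
          · have hkp : ¬ (k = p) := by
              intro hkp
              rw [hkm] at hkp
              rw [hkp] at h1
              omega
            refine ⟨(c p).toNat, ?_⟩
            rw [if_pos hkm, if_neg hkp, add_zero]
            exact_mod_cast (Int.toNat_of_nonneg (show (0:ℤ) ≤ c p by omega)).symm
          · by_cases hkp : k = p
            · refine ⟨(-c m).toNat, ?_⟩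
              rw [if_neg hkm, if_pos hkp, zero_add]
              exact_mod_cast (Int.toNat_of_nonneg (show (0:ℤ) ≤ -c m by omega)).symm
            · exact ⟨0, by simp [hkm, hkp]⟩
  · -- orthogonality
    intro i hi
    have hilast : i ≠ last := by
      intro h
      rw [h] at hi
      simp only [hlast] at hi
      omega
    have hσi : σ i ≠ p := by
      intro h
      have : σ i = σ last := by rw [h, hσ]; simp [Equiv.swap_apply_left]
      exact hilast (σ.injective this)
    simp only [Function.comp_apply]
    rw [hu_ne (σ i) hσi]
    exact wvec_dot c p q (σ i)
end

section
/- Let M ⊆ ℤ_{≥0}^{n−1} consist of those z for which there exists α ∈ ℤ^n with ω(x^α) = z and ⟨ξ,α⟩ ≥ 0 for all ξ ∈ ℝ_{≥0}^n orthogonal to the loose edge E. Then M is closed under addition, and every w ∈ ℤ_{≥0}^{n−1} with dim R_w > 0 belongs to M. -/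
open Finset

/-- Weight of an exponent `α` with respect to the vectors `ξ_j`. -/
def wtF {n m : ℕ} (ξ : Fin m → Fin n → ℕ) (α : Fin n →₀ ℕ) : Fin m → ℕ :=
  fun j => ∑ i, ξ j i * α i

/-- `R_w`: the `K`-span of the monomials of weight `w`. -/
noncomputable def Rw (K : Type*) [Field K] {n m : ℕ} (ξ : Fin m → Fin n → ℕ)
    (w : Fin m → ℕ) : Submodule K (MvPolynomial (Fin n) K) :=
  Submodule.span K {p | ∃ α : Fin n →₀ ℕ, wtF ξ α = w ∧ p = MvPolynomial.monomial α (1 : K)}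

/-- The set `M` of admissible weights: `z ∈ M` iff there is `α ∈ ℤⁿ` of weight `z`
pairing nonnegatively with every `ξ ∈ ℝ_{≥0}ⁿ` orthogonal to the direction `c`. -/
def Mset {n m : ℕ} (ξ : Fin m → Fin n → ℕ) (c : Fin n → ℤ) (z : Fin m → ℕ) : Prop :=
  ∃ α : Fin n → ℤ, (∀ j, ∑ i, (ξ j i : ℤ) * α i = (z j : ℤ)) ∧
    ∀ η : Fin n → ℝ, (∀ i, 0 ≤ η i) → (∑ i, η i * (c i : ℝ)) = 0 →
      0 ≤ ∑ i, η i * (α i : ℝ)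

/-- `c` is a primitive lattice vector. -/
def IsPrimitiveVec {n : ℕ} (c : Fin n → ℤ) : Prop :=
  (Finset.univ.gcd fun i => (c i).natAbs) = 1

/-- The segment `E` is parallel to the vector `c`. -/
def ParallelTo {n : ℕ} (E : Set (Fin n → ℝ)) (c : Fin n → ℤ) : Prop :=
  ∃ a b : Fin n → ℝ, a ≠ b ∧ E = segment ℝ a b ∧
    ∃ t : ℝ, (b - a) = t • (fun i => (c i : ℝ))

/-- `ξ_1, …, ξ_{n-1}` are linearly independent and orthogonal to `c`. -/
def OrthSetup {n m : ℕ} (ξ : Fin m → Fin n → ℕ) (c : Fin n → ℤ) : Prop :=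
  LinearIndependent ℝ (fun j => fun i => ((ξ j i : ℝ))) ∧
  ∀ j, ∑ i, (ξ j i : ℤ) * c i = 0

/-- Relatively prime polynomials: no nonconstant (non-unit) common factor. -/
def RelPrime {R : Type*} [CommRing R] (G H : R) : Prop :=
  ∀ d : R, d ∣ G → d ∣ H → IsUnit d

/-- `M` is closed under addition, and every weight `w` with
`dim R_w > 0` belongs to `M`. -/
theorem Mset_addClosed_and_mem (K : Type*) [Field K] {n : ℕ} (Δ E : Set (Fin n → ℝ))
    (hΔ : IsNewtonPolyhedron Δ) (hE : IsLooseEdge Δ E)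
    (c : Fin n → ℤ) (hprim : IsPrimitiveVec c) (hpar : ParallelTo E c)
    (ξ : Fin (n-1) → Fin n → ℕ) (horth : OrthSetup ξ c) :
    (∀ z₁ z₂ : Fin (n-1) → ℕ, Mset ξ c z₁ → Mset ξ c z₂ → Mset ξ c (z₁ + z₂)) ∧
    (∀ w : Fin (n-1) → ℕ, 0 < Module.finrank K (Rw K ξ w) → Mset ξ c w) := by
  constructor
  · rintro z₁ z₂ ⟨α₁, h₁, g₁⟩ ⟨α₂, h₂, g₂⟩
    refine ⟨α₁ + α₂, fun j => ?_, fun η hη hc => ?_⟩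
    · simp only [Pi.add_apply, mul_add, Finset.sum_add_distrib, h₁ j, h₂ j, Int.cast_add]
      push_cast
      ring
    · have G1 := g₁ η hη hc
      have G2 := g₂ η hη hc
      have : ∑ i, η i * ((α₁ + α₂) i : ℝ) =
          (∑ i, η i * (α₁ i : ℝ)) + ∑ i, η i * (α₂ i : ℝ) := by
        rw [← Finset.sum_add_distrib]
        refine Finset.sum_congr rfl fun i _ => ?_
        simp [Pi.add_apply, mul_add]
      rw [this]; linarith
  · intro w hw
    by_contra hM
    have hempty : {p : MvPolynomial (Fin n) K |
        ∃ α : Fin n →₀ ℕ, wtF ξ α = w ∧ p = MvPolynomial.monomial α (1 : K)} = ∅ := by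
      ext p
      simp only [Set.mem_setOf_eq, Set.mem_empty_iff_false, iff_false]
      rintro ⟨α, hα, rfl⟩
      apply hM
      refine ⟨fun i => (α i : ℤ), fun j => ?_, fun η hη _ => ?_⟩
      · have := congrFun hα j
        simp only [wtF] at this
        rw [← this]
        push_cast
        rfl
      · exact Finset.sum_nonneg fun i _ => mul_nonneg (hη i) (by positivity)
    have : Rw K ξ w = ⊥ := by
      rw [Rw, hempty, Submodule.span_empty]
    rw [this] at hw
    simp at hw
end

section
/- Let w ∈ ℤ_{≥0}^{n−1} and z ∈ M. Assume that R_w contains two coprime monomials. Then dim R_{w+z} = dim R_w + dim R_z − 1. -/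
open Finset

-- ===== auxiliary lemmas =====

lemma div_lem1 (a c k : ℤ) (hc : 0 < c) : 0 ≤ a + k * c ↔ -(a / c) ≤ k := by
  have h1 := Int.mul_ediv_add_emod a c
  have h2 := Int.emod_nonneg a (ne_of_gt hc)
  have h3 := Int.emod_lt_of_pos a hc
  constructor
  · intro h
    by_contra h'
    push_neg at h'
    have hk : k ≤ -(a/c) - 1 := by omega
    have : k * c ≤ (-(a/c) - 1) * c := mul_le_mul_of_nonneg_right hk (le_of_lt hc)
    nlinarith
  · intro h
    have : (-(a/c)) * c ≤ k * c := mul_le_mul_of_nonneg_right h (le_of_lt hc)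
    nlinarith

lemma div_lem2 (a c k : ℤ) (hc : c < 0) : 0 ≤ a + k * c ↔ k ≤ a / (-c) := by
  have hc' : 0 < -c := by omega
  have h1 := Int.mul_ediv_add_emod a (-c)
  have h2 := Int.emod_nonneg a (by omega : -c ≠ 0)
  have h3 := Int.emod_lt_of_pos a hc'
  constructor
  · intro h
    by_contra h'
    push_neg at h'
    have hk : a/(-c) + 1 ≤ k := by omega
    have : (a/(-c) + 1) * (-c) ≤ k * (-c) := mul_le_mul_of_nonneg_right hk (le_of_lt hc')
    nlinarith
  · intro h
    have : k * (-c) ≤ (a/(-c)) * (-c) := mul_le_mul_of_nonneg_right h (le_of_lt hc')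
    nlinarith

lemma div_lem3 (a e c d : ℤ) (hc : 0 < c) (hd : 0 < d) (h : 0 ≤ d * a + c * e) :
    -(a / c) ≤ e / d + 1 := by
  have h1 := Int.mul_ediv_add_emod a c
  have h2 := Int.emod_nonneg a (ne_of_gt hc)
  have h3 := Int.emod_lt_of_pos a hc
  have h4 := Int.mul_ediv_add_emod e d
  have h5 := Int.emod_nonneg e (ne_of_gt hd)
  have h6 := Int.emod_lt_of_pos e hd
  nlinarith [mul_pos hc hd]

lemma ker_collinear {n : ℕ} (ξ : Fin (n-1) → Fin n → ℕ) (c : Fin n → ℤ)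
    (hli : LinearIndependent ℝ (fun j => fun i => ((ξ j i : ℝ))))
    (hoc : ∀ j, ∑ i, (ξ j i : ℤ) * c i = 0)
    (hprim : (Finset.univ.gcd fun i => (c i).natAbs) = 1)
    (v : Fin n → ℤ) (hv : ∀ j, ∑ i, (ξ j i : ℤ) * v i = 0) :
    ∃ k : ℤ, ∀ i, v i = k * c i := by
  classical
  -- c ≠ 0
  have hc0 : ∃ i, c i ≠ 0 := by
    by_contra h
    push_neg at h
    have : (Finset.univ.gcd fun i => (c i).natAbs) = 0 := by
      apply Finset.gcd_eq_zero_iff.mpr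
      intro i _
      simp [h i]
    omega
  obtain ⟨i₀, hi₀⟩ := hc0
  have hn : 1 ≤ n := i₀.pos
  -- matrix setup
  set M : Matrix (Fin (n-1)) (Fin n) ℝ := fun j i => (ξ j i : ℝ) with hM
  -- transpose injective
  have hTinj : Function.Injective (M.transpose.mulVecLin) := by
    rw [← LinearMap.ker_eq_bot]
    rw [LinearMap.ker_eq_bot']
    intro y hy
    have := Fintype.linearIndependent_iff.mp hli y ?_
    · funext j; exact this j
    · funext i
      have := congrFun hy i
      simpa [Matrix.mulVecLin_apply, Matrix.mulVec, dotProduct, Matrix.transpose,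
        mul_comm] using this
  have hrankT : M.transpose.rank = n - 1 := by
    have h1 : Module.finrank ℝ (LinearMap.range M.transpose.mulVecLin) +
        Module.finrank ℝ (LinearMap.ker M.transpose.mulVecLin) = n - 1 := by
      simpa using LinearMap.finrank_range_add_finrank_ker (M.transpose.mulVecLin)
    have h2 : LinearMap.ker M.transpose.mulVecLin = ⊥ := LinearMap.ker_eq_bot.mpr hTinj
    rw [h2] at h1
    simpa [Matrix.rank] using h1
  have hrank : M.rank = n - 1 := by rw [← Matrix.rank_transpose]; exact hrankT
  have hker : Module.finrank ℝ (LinearMap.ker M.mulVecLin) = 1 := by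
    have h1 : Module.finrank ℝ (LinearMap.range M.mulVecLin) +
        Module.finrank ℝ (LinearMap.ker M.mulVecLin) = n := by
      simpa using LinearMap.finrank_range_add_finrank_ker (M.mulVecLin)
    have h2 : Module.finrank ℝ (LinearMap.range M.mulVecLin) = n - 1 := hrank
    omega
  -- c and v in the kernel
  have hmem : ∀ u : Fin n → ℤ, (∀ j, ∑ i, (ξ j i : ℤ) * u i = 0) →
      (fun i => (u i : ℝ)) ∈ LinearMap.ker M.mulVecLin := by
    intro u hu
    rw [LinearMap.mem_ker]
    funext j
    have : ((∑ i, (ξ j i : ℤ) * u i : ℤ) : ℝ) = 0 := by rw [hu j]; simp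
    push_cast at this
    rw [Matrix.mulVecLin_apply]
    simpa [Matrix.mulVec, dotProduct, hM] using this
  have hcm := hmem c hoc
  have hvm := hmem v hv
  set cK : LinearMap.ker M.mulVecLin := ⟨_, hcm⟩ with hcK
  have hcne : cK ≠ 0 := by
    intro h
    apply hi₀
    have := congrFun (congrArg Subtype.val h) i₀
    simpa [hcK] using this
  have hspan := (finrank_eq_one_iff_of_nonzero cK hcne).mp hker
  have hvK : (⟨_, hvm⟩ : LinearMap.ker M.mulVecLin) ∈ Submodule.span ℝ {cK} := by
    rw [hspan]; trivial
  obtain ⟨r, hr⟩ := Submodule.mem_span_singleton.mp hvK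
  have hreq : ∀ i, (v i : ℝ) = r * (c i : ℝ) := by
    intro i
    have := congrFun (congrArg Subtype.val hr) i
    simpa [hcK] using this.symm
  -- cross products
  have hcross : ∀ i, c i₀ * v i = v i₀ * c i := by
    intro i
    have : ((c i₀ * v i : ℤ) : ℝ) = ((v i₀ * c i : ℤ) : ℝ) := by
      push_cast
      rw [hreq i, hreq i₀]; ring
    exact_mod_cast this
  -- divisibility via gcd
  have hdvd : ∀ i, (c i₀).natAbs ∣ (v i₀).natAbs * (c i).natAbs := by
    intro i
    rw [← Int.natAbs_mul]
    exact Int.natAbs_dvd_natAbs.mpr ⟨v i, (hcross i).symm ▸ rfl⟩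
  have hgcd : (c i₀).natAbs ∣ (v i₀).natAbs := by
    have h1 : (c i₀).natAbs ∣ Finset.univ.gcd (fun i => (v i₀).natAbs * (c i).natAbs) :=
      Finset.dvd_gcd fun i _ => hdvd i
    rwa [Finset.gcd_mul_left, hprim, normalize_eq, mul_one] at h1
  have hdvdZ : c i₀ ∣ v i₀ := Int.natAbs_dvd_natAbs.mp hgcd
  obtain ⟨k, hk⟩ := hdvdZ
  refine ⟨k, fun i => ?_⟩
  have := hcross i
  rw [hk] at this
  have h2 : c i₀ * v i = c i₀ * (k * c i) := by rw [this]; ring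
  exact mul_left_cancel₀ hi₀ h2

noncomputable def toexp {n : ℕ} (g : Fin n → ℤ) : Fin n →₀ ℕ :=
  Finsupp.equivFunOnFinite.symm fun i => (g i).toNat

lemma toexp_apply {n : ℕ} (g : Fin n → ℤ) (i : Fin n) : toexp g i = (g i).toNat := rfl

lemma finrank_span_monomials (K : Type*) [Field K] {n : ℕ} (F : Finset (Fin n →₀ ℕ)) :
    Module.finrank K (Submodule.span K
      ((fun α => (MvPolynomial.monomial α (1:K) : MvPolynomial (Fin n) K)) '' ↑F)) = F.card := by
  classical
  set m : (Fin n →₀ ℕ) → MvPolynomial (Fin n) K := fun α => MvPolynomial.monomial α (1:K) with hm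
  have hinj : Function.Injective m := MvPolynomial.monomial_left_injective one_ne_zero
  have himg : m '' ↑F = ↑(F.image m) := by rw [Finset.coe_image]
  rw [himg]
  have hsub : ↑(F.image m) ⊆ Set.range (MvPolynomial.basisMonomials (Fin n) K) := by
    intro p hp
    rw [MvPolynomial.coe_basisMonomials]
    obtain ⟨α, _, hα⟩ := Finset.mem_image.mp (by exact_mod_cast hp)
    exact ⟨α, hα⟩
  have hli : LinearIndependent K (Subtype.val : ↑(↑(F.image m) : Set (MvPolynomial (Fin n) K)) → _) :=
    (LinearIndepOn.mono (s := Set.range (MvPolynomial.basisMonomials (Fin n) K)) (v := id) ((linearIndepOn_id_range_iff (MvPolynomial.basisMonomials (Fin n) K).injective).mpr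
      (MvPolynomial.basisMonomials (Fin n) K).linearIndependent) hsub :)
  rw [finrank_span_set_eq_card hli]
  rw [Finset.toFinset_coe]
  exact Finset.card_image_of_injective F hinj

-- the general weight-set counting lemma
lemma rank_Rw_eq (K : Type*) [Field K] {n : ℕ} (ξ : Fin (n-1) → Fin n → ℕ) (c : Fin n → ℤ)
    (hker : ∀ u : Fin n → ℤ, (∀ j, ∑ i, (ξ j i : ℤ) * u i = 0) → ∃ k : ℤ, ∀ i, u i = k * c i)
    (hoc : ∀ j, ∑ i, (ξ j i : ℤ) * c i = 0)
    (i₀ : Fin n) (hi₀ : c i₀ ≠ 0)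
    (v : Fin (n-1) → ℕ) (β : Fin n → ℤ)
    (hβw : ∀ j, ∑ i, (ξ j i : ℤ) * β i = (v j : ℤ))
    (lo hi : ℤ)
    (hIcc : ∀ k : ℤ, (∀ i, 0 ≤ β i + k * c i) ↔ (lo ≤ k ∧ k ≤ hi)) :
    Module.finrank K (Rw K ξ v) = (hi + 1 - lo).toNat := by
  classical
  set f : ℤ → (Fin n →₀ ℕ) := fun k => toexp (fun i => β i + k * c i) with hf
  set F : Finset (Fin n →₀ ℕ) := (Finset.Icc lo hi).image f with hF
  -- the defining set of Rw equals monomial image of F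
  have hset : {p : MvPolynomial (Fin n) K | ∃ α : Fin n →₀ ℕ, wtF ξ α = v ∧
      p = MvPolynomial.monomial α (1 : K)} =
      (fun α => (MvPolynomial.monomial α (1:K) : MvPolynomial (Fin n) K)) '' ↑F := by
    ext p
    simp only [Set.mem_setOf_eq, Set.mem_image, Finset.mem_coe]
    constructor
    · rintro ⟨α, hαw, rfl⟩
      refine ⟨α, ?_, rfl⟩
      -- α is f k for some k ∈ Icc
      have hγ : ∀ j, ∑ i, (ξ j i : ℤ) * ((α i : ℤ) - β i) = 0 := by
        intro j
        have h1 : ((∑ i, ξ j i * α i : ℕ) : ℤ) = (v j : ℤ) := by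
          have := congrFun hαw j
          exact_mod_cast this
        push_cast at h1
        have h2 := hβw j
        calc ∑ i, (ξ j i : ℤ) * ((α i : ℤ) - β i)
            = (∑ i, (ξ j i : ℤ) * (α i : ℤ)) - ∑ i, (ξ j i : ℤ) * β i := by
              rw [← Finset.sum_sub_distrib]; congr 1; ext i; ring
          _ = 0 := by rw [h1, h2]; ring
      obtain ⟨k, hk⟩ := hker _ hγ
      have hαk : ∀ i, (α i : ℤ) = β i + k * c i := by
        intro i; have := hk i; omega
      have hnn : ∀ i, 0 ≤ β i + k * c i := by
        intro i; rw [← hαk i]; exact_mod_cast Nat.zero_le _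
      refine Finset.mem_image.mpr ⟨k, Finset.mem_Icc.mpr ((hIcc k).mp hnn), ?_⟩
      ext i
      rw [toexp_apply]
      have := hαk i
      omega
    · rintro ⟨α, hα, rfl⟩
      refine ⟨α, ?_, rfl⟩
      obtain ⟨k, hk, rfl⟩ := Finset.mem_image.mp hα
      have hnn : ∀ i, 0 ≤ β i + k * c i := (hIcc k).mpr (Finset.mem_Icc.mp hk)
      funext j
      have : ((∑ i, ξ j i * (f k) i : ℕ) : ℤ) = (v j : ℤ) := by
        push_cast
        have h1 : ∀ i, ((f k i : ℕ) : ℤ) = β i + k * c i := by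
          intro i; have := hnn i; rw [hf]; simp only [toexp_apply]; omega
        calc ∑ i, (ξ j i : ℤ) * ((f k i : ℕ) : ℤ)
            = ∑ i, (ξ j i : ℤ) * (β i + k * c i) := by
              congr 1; ext i; rw [h1 i]
          _ = (∑ i, (ξ j i : ℤ) * β i) + k * ∑ i, (ξ j i : ℤ) * c i := by
              rw [Finset.mul_sum]; rw [← Finset.sum_add_distrib]; congr 1; ext i; ring
          _ = (v j : ℤ) := by rw [hβw j, hoc j]; ring
      exact_mod_cast this
  have hcard : F.card = (hi + 1 - lo).toNat := by
    rw [hF, Finset.card_image_of_injOn, Int.card_Icc]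
    intro k hk k' hk' heq
    have h1 := (hIcc k).mpr (Finset.mem_Icc.mp hk)
    have h2 := (hIcc k').mpr (Finset.mem_Icc.mp hk')
    have := congrArg (fun g => g i₀) heq
    simp only [hf, toexp_apply] at this
    have h1' := h1 i₀
    have h2' := h2 i₀
    have h4 : k * c i₀ = k' * c i₀ := by omega
    exact mul_right_cancel₀ hi₀ h4
  rw [Rw, hset, finrank_span_monomials, hcard]

-- sum helper lemmas
lemma sum_single {n : ℕ} (i : Fin n) (r : ℝ) (x : Fin n → ℝ) :
    ∑ u, (if u = i then r else 0) * x u = r * x i := by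
  rw [Finset.sum_eq_single i]
  · simp
  · intro b _ hb; simp [hb]
  · simp
lemma sum_pair {n : ℕ} (i j : Fin n) (hij : i ≠ j) (r s : ℝ) (x : Fin n → ℝ) :
    ∑ u, (if u = i then r else if u = j then s else 0) * x u = r * x i + s * x j := by
  have : ∀ u, (if u = i then r else if u = j then s else 0) * x u
      = (if u = i then r else 0) * x u + (if u = j then s else 0) * x u := by
    intro u
    by_cases h1 : u = i
    · subst h1; simp [hij]
    · by_cases h2 : u = j <;> simp [h1, h2, Ne.symm hij]
  rw [Finset.sum_congr rfl (fun u _ => this u), Finset.sum_add_distrib, sum_single, sum_single]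

lemma core (K : Type*) [Field K] {n : ℕ} (ξ : Fin (n-1) → Fin n → ℕ) (c : Fin n → ℤ)
    (hker : ∀ u : Fin n → ℤ, (∀ j, ∑ i, (ξ j i : ℤ) * u i = 0) → ∃ k : ℤ, ∀ i, u i = k * c i)
    (hoc : ∀ j, ∑ i, (ξ j i : ℤ) * c i = 0)
    (iP : Fin n) (hiP : 0 < c iP) (iN : Fin n) (hiN : c iN < 0)
    (w z : Fin (n-1) → ℕ)
    (a : Fin n →₀ ℕ) (t : ℤ) (ht : 1 ≤ t)
    (haP : ∀ i, 0 < c i → a i = 0)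
    (haN : ∀ i, c i < 0 → (a i : ℤ) = t * (-c i))
    (ha0 : ∀ i, c i = 0 → a i = 0)
    (haw : wtF ξ a = w)
    (α : Fin n → ℤ) (hαz : ∀ j, ∑ i, (ξ j i : ℤ) * α i = (z j : ℤ))
    (hM : ∀ η : Fin n → ℝ, (∀ i, 0 ≤ η i) → (∑ i, η i * (c i : ℝ)) = 0 →
      0 ≤ ∑ i, η i * (α i : ℝ)) :
    Module.finrank K (Rw K ξ (w + z)) =
      Module.finrank K (Rw K ξ w) + Module.finrank K (Rw K ξ z) - 1 := by
  classical
  set P : Finset (Fin n) := Finset.univ.filter (fun i => 0 < c i) with hPdef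
  set N : Finset (Fin n) := Finset.univ.filter (fun i => c i < 0) with hNdef
  have hP : P.Nonempty := ⟨iP, by simp [hPdef, hiP]⟩
  have hN : N.Nonempty := ⟨iN, by simp [hNdef, hiN]⟩
  set A : ℤ := P.sup' hP (fun i => -(α i / c i)) with hAdef
  set B : ℤ := N.inf' hN (fun i => α i / (-c i)) with hBdef
  -- facts from the M-condition
  have hz0 : ∀ i, c i = 0 → 0 ≤ α i := by
    intro i hci
    have := hM (fun u => if u = i then 1 else 0) (by intro u; split <;> norm_num)
      (by rw [sum_single]; simp [hci])
    rw [sum_single] at this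
    have : (0:ℝ) ≤ (α i : ℝ) := by linarith
    exact_mod_cast this
  have hpair : ∀ i ∈ P, ∀ j ∈ N, 0 ≤ (-c j) * α i + c i * α j := by
    intro i hi j hj
    have hci : 0 < c i := by simpa [hPdef] using hi
    have hcj : c j < 0 := by simpa [hNdef] using hj
    have hij : i ≠ j := by intro h; rw [h] at hci; omega
    have := hM (fun u => if u = i then ((-c j : ℤ) : ℝ) else if u = j then ((c i : ℤ) : ℝ) else 0)
      (by intro u
          split
          · exact_mod_cast (by omega : (0:ℤ) ≤ -c j)
          · split
            · exact_mod_cast hci.le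
            · exact le_refl 0)
      (by rw [sum_pair i j hij]; push_cast; ring)
    rw [sum_pair i j hij] at this
    have : (0:ℝ) ≤ ((-c j) * α i + c i * α j : ℤ) := by push_cast; push_cast at this; linarith
    exact_mod_cast this
  have hAB : A ≤ B + 1 := by
    rw [hAdef]
    apply Finset.sup'_le
    intro i hi
    have hci : 0 < c i := by simpa [hPdef] using hi
    have h1 : ∀ j ∈ N, -(α i / c i) - 1 ≤ α j / (-c j) := by
      intro j hj
      have hcj : c j < 0 := by simpa [hNdef] using hj
      have := div_lem3 (α i) (α j) (c i) (-c j) hci (by omega) (hpair i hi j hj)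
      omega
    have h2 : -(α i / c i) - 1 ≤ B := Finset.le_inf' hN _ h1
    omega
  -- weight of a over ℤ
  have hawZ : ∀ j, ∑ i, (ξ j i : ℤ) * (a i : ℤ) = (w j : ℤ) := by
    intro j
    have : ((∑ i, ξ j i * a i : ℕ) : ℤ) = (w j : ℤ) := by exact_mod_cast congrFun haw j
    push_cast at this
    exact this
  -- three interval computations
  have hIw : ∀ k : ℤ, (∀ i, 0 ≤ (a i : ℤ) + k * c i) ↔ (0 ≤ k ∧ k ≤ t) := by
    intro k
    constructor
    · intro h
      constructor
      · have := h iP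
        rw [haP iP hiP] at this
        push_cast at this
        nlinarith
      · have := h iN
        rw [haN iN hiN] at this
        nlinarith
    · rintro ⟨h0, h1⟩ i
      rcases lt_trichotomy (c i) 0 with hc | hc | hc
      · rw [haN i hc]; nlinarith
      · rw [ha0 i hc, hc]; simp
      · rw [haP i hc]; push_cast; nlinarith
  have hIz : ∀ k : ℤ, (∀ i, 0 ≤ α i + k * c i) ↔ (A ≤ k ∧ k ≤ B) := by
    intro k
    constructor
    · intro h
      constructor
      · rw [hAdef]
        apply Finset.sup'_le
        intro i hi
        have hci : 0 < c i := by simpa [hPdef] using hi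
        exact (div_lem1 (α i) (c i) k hci).mp (h i)
      · rw [hBdef]
        apply Finset.le_inf'
        intro i hi
        have hci : c i < 0 := by simpa [hNdef] using hi
        exact (div_lem2 (α i) (c i) k hci).mp (h i)
    · rintro ⟨h0, h1⟩ i
      rcases lt_trichotomy (c i) 0 with hc | hc | hc
      · refine (div_lem2 (α i) (c i) k hc).mpr ?_
        have : B ≤ α i / (-c i) := by
          rw [hBdef]; exact Finset.inf'_le (fun i => α i / (-c i)) (Finset.mem_filter.mpr ⟨Finset.mem_univ i, hc⟩)
        omega
      · have := hz0 i hc; rw [hc]; omega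
      · refine (div_lem1 (α i) (c i) k hc).mpr ?_
        have : -(α i / c i) ≤ A := by
          rw [hAdef]; exact Finset.le_sup' (fun i => -(α i / c i)) (Finset.mem_filter.mpr ⟨Finset.mem_univ i, hc⟩)
        omega
  have hIwz : ∀ k : ℤ, (∀ i, 0 ≤ ((a i : ℤ) + α i) + k * c i) ↔ (A ≤ k ∧ k ≤ t + B) := by
    intro k
    have key : ∀ i, ((a i : ℤ) + α i) + k * c i = α i + (if c i < 0 then (k - t) else k) * c i + (if c i < 0 then 0 else (a i : ℤ)) := by
      intro i
      split
      · next hc => rw [haN i hc]; ring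
      · next hc => ring
    constructor
    · intro h
      constructor
      · rw [hAdef]
        apply Finset.sup'_le
        intro i hi
        have hci : 0 < c i := by simpa [hPdef] using hi
        have := h i
        rw [haP i hci] at this
        push_cast at this
        refine (div_lem1 (α i) (c i) k hci).mp (by linarith)
      · have hB : k - t ≤ B := by
          rw [hBdef]
          apply Finset.le_inf'
          intro i hi
          have hci : c i < 0 := by simpa [hNdef] using hi
          have := h i
          rw [haN i hci] at this
          have h2 : 0 ≤ α i + (k - t) * c i := by nlinarith
          exact (div_lem2 (α i) (c i) (k - t) hci).mp h2
        omega
    · rintro ⟨h0, h1⟩ i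
      rcases lt_trichotomy (c i) 0 with hc | hc | hc
      · rw [haN i hc]
        have hB : B ≤ α i / (-c i) := by
          rw [hBdef]; exact Finset.inf'_le (fun i => α i / (-c i)) (Finset.mem_filter.mpr ⟨Finset.mem_univ i, hc⟩)
        have h2 : 0 ≤ α i + (k - t) * c i :=
          (div_lem2 (α i) (c i) (k - t) hc).mpr (by omega)
        nlinarith
      · have := hz0 i hc
        have hai : (a i : ℤ) = 0 := by rw [ha0 i hc]; simp
        rw [hc, hai]; omega
      · rw [haP i hc]
        have hA : -(α i / c i) ≤ A := by
          rw [hAdef]; exact Finset.le_sup' (fun i => -(α i / c i)) (Finset.mem_filter.mpr ⟨Finset.mem_univ i, hc⟩)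
        have h2 : 0 ≤ α i + k * c i := (div_lem1 (α i) (c i) k hc).mpr (by omega)
        push_cast
        omega
  -- weights over ℤ for w+z
  have hwzZ : ∀ j, ∑ i, (ξ j i : ℤ) * ((a i : ℤ) + α i) = ((w + z) j : ℤ) := by
    intro j
    have : ∑ i, (ξ j i : ℤ) * ((a i : ℤ) + α i)
        = (∑ i, (ξ j i : ℤ) * (a i : ℤ)) + ∑ i, (ξ j i : ℤ) * α i := by
      rw [← Finset.sum_add_distrib]; congr 1; ext i; ring
    rw [this, hawZ j, hαz j]
    simp [Pi.add_apply]
  have hr1 := rank_Rw_eq K ξ c hker hoc iP (by omega) (w + z) (fun i => (a i : ℤ) + α i) hwzZ A (t + B) hIwz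
  have hr2 := rank_Rw_eq K ξ c hker hoc iP (by omega) w (fun i => (a i : ℤ)) hawZ 0 t hIw
  have hr3 := rank_Rw_eq K ξ c hker hoc iP (by omega) z α hαz A B hIz
  rw [hr1, hr2, hr3]
  omega

lemma mixed_signs {n : ℕ} (Δ E : Set (Fin n → ℝ))
    (hΔ : IsNewtonPolyhedron Δ) (hE : IsLooseEdge Δ E)
    (c : Fin n → ℤ) (hpar : ParallelTo E c) (hc0 : ∃ i, c i ≠ 0) :
    (∃ i, 0 < c i) ∧ (∃ j, c j < 0) := by
  classical
  obtain ⟨a₀, b₀, hab, hseg, r, hr⟩ := hpar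
  obtain ⟨⟨ξ₀, hξnn, hface⟩, hcomp, _⟩ := hE
  obtain ⟨S, hSne, hSnat, hΔeq⟩ := hΔ
  have hr0 : r ≠ 0 := by
    intro h
    apply hab
    have : b₀ - a₀ = 0 := by rw [hr, h, zero_smul]
    funext i
    have := congrFun this i
    simp only [Pi.sub_apply, Pi.zero_apply] at this
    linarith
  have ha₀E : a₀ ∈ E := hseg ▸ left_mem_segment ℝ a₀ b₀
  have hb₀E : b₀ ∈ E := hseg ▸ right_mem_segment ℝ a₀ b₀
  have ha₀F : a₀ ∈ NPface Δ ξ₀ := hface ▸ ha₀E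
  have hb₀F : b₀ ∈ NPface Δ ξ₀ := hface ▸ hb₀E
  obtain ⟨ha₀Δ, hamin⟩ := ha₀F
  obtain ⟨hb₀Δ, hbmin⟩ := hb₀F
  -- strict positivity of ξ₀
  have hξpos : ∀ i, 0 < ξ₀ i := by
    intro i₁
    rcases lt_or_eq_of_le (hξnn i₁) with h | h
    · exact h
    have hξz : ξ₀ i₁ = 0 := h.symm
    exfalso
    set m : ℝ := |b₀ i₁ - a₀ i₁| + 1 with hm
    have hmpos : 0 < m := by positivity
    set p : Fin n → ℝ := fun u => a₀ u + (if u = i₁ then m else 0) with hp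
    have hpΔ : p ∈ Δ := by
      rw [hΔeq] at ha₀Δ ⊢
      obtain ⟨y, hy, g, hg, hag⟩ := ha₀Δ
      refine ⟨y, hy, fun u => g u + (if u = i₁ then m else 0), ?_, ?_⟩
      · intro u
        have := hg u
        dsimp only
        split <;> [linarith; linarith]
      · funext u
        have := congrFun hag u
        simp only [Pi.add_apply] at this ⊢
        rw [hp]
        dsimp only
        rw [this]
        ring
    have hdotp : dotp ξ₀ p = dotp ξ₀ a₀ := by
      rw [dotp, dotp, hp]
      have : ∀ u, ξ₀ u * (a₀ u + (if u = i₁ then m else 0))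
          = ξ₀ u * a₀ u + (if u = i₁ then ξ₀ u * m else 0) := by
        intro u; split <;> ring
      rw [Finset.sum_congr rfl (fun u _ => this u), Finset.sum_add_distrib,
        Finset.sum_ite_eq' Finset.univ i₁ (fun u => ξ₀ u * m)]
      simp [hξz]
    have hpE : p ∈ E := by
      rw [hface]
      exact ⟨hpΔ, fun b hb => by rw [hdotp]; exact hamin b hb⟩
    rw [hseg] at hpE
    obtain ⟨u, v, hu, hv, huv, hpuv⟩ := hpE
    have hpi := congrFun hpuv i₁
    simp only [Pi.add_apply, Pi.smul_apply, smul_eq_mul] at hpi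
    have hpi' : p i₁ = a₀ i₁ + m := by rw [hp]; simp
    rw [hpi'] at hpi
    have hueq : u = 1 - v := by linarith
    rw [hueq] at hpi
    have hveq : v * (b₀ i₁ - a₀ i₁) = m := by nlinarith
    have hv1 : v ≤ 1 := by linarith
    set d : ℝ := b₀ i₁ - a₀ i₁ with hd
    have h1 : v * d ≤ v * |d| := mul_le_mul_of_nonneg_left (le_abs_self d) hv
    have h2 : v * |d| ≤ 1 * |d| := mul_le_mul_of_nonneg_right hv1 (abs_nonneg d)
    rw [hm] at hveq
    linarith
  -- sum of ξ₀ * c = 0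
  have hbi : ∀ i, b₀ i = a₀ i + r * (c i : ℝ) := by
    intro i
    have := congrFun hr i
    simp only [Pi.sub_apply, Pi.smul_apply, smul_eq_mul] at this
    linarith
  have hdeq : dotp ξ₀ b₀ = dotp ξ₀ a₀ + r * ∑ i, ξ₀ i * (c i : ℝ) := by
    rw [dotp, dotp, Finset.mul_sum, ← Finset.sum_add_distrib]
    congr 1
    funext i
    rw [hbi i]
    ring
  have heq : dotp ξ₀ a₀ = dotp ξ₀ b₀ :=
    le_antisymm (hamin b₀ hb₀Δ) (hbmin a₀ ha₀Δ)
  have hsum0 : ∑ i, ξ₀ i * (c i : ℝ) = 0 := by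
    have : r * ∑ i, ξ₀ i * (c i : ℝ) = 0 := by linarith [heq, hdeq]
    exact (mul_eq_zero.mp this).resolve_left hr0
  obtain ⟨i₀, hi₀⟩ := hc0
  constructor
  · by_contra h
    push_neg at h
    have hterm : ∀ i ∈ Finset.univ, ξ₀ i * (c i : ℝ) ≤ 0 := by
      intro i _
      have h1 : c i ≤ 0 := h i
      have h2 : (c i : ℝ) ≤ 0 := by exact_mod_cast h1
      exact mul_nonpos_of_nonneg_of_nonpos (hξnn i) h2
    have := (Finset.sum_eq_zero_iff_of_nonpos hterm).mp hsum0 i₀ (Finset.mem_univ i₀)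
    have hc : (c i₀ : ℝ) ≠ 0 := by exact_mod_cast hi₀
    exact hc (by
      rcases mul_eq_zero.mp this with h' | h'
      · exact absurd h' (ne_of_gt (hξpos i₀))
      · exact h')
  · by_contra h
    push_neg at h
    have hterm : ∀ i ∈ Finset.univ, 0 ≤ ξ₀ i * (c i : ℝ) := by
      intro i _
      have h1 : 0 ≤ c i := h i
      have h2 : (0:ℝ) ≤ (c i : ℝ) := by exact_mod_cast h1
      exact mul_nonneg (hξnn i) h2
    have := (Finset.sum_eq_zero_iff_of_nonneg hterm).mp hsum0 i₀ (Finset.mem_univ i₀)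
    have hc : (c i₀ : ℝ) ≠ 0 := by exact_mod_cast hi₀
    exact hc (by
      rcases mul_eq_zero.mp this with h' | h'
      · exact absurd h' (ne_of_gt (hξpos i₀))
      · exact h')

lemma coprime_struct {n : ℕ} (c : Fin n → ℤ) (a b : Fin n →₀ ℕ) (t : ℤ) (ht : 0 < t)
    (hd : ∀ i, (b i : ℤ) - a i = t * c i) (hmin : ∀ i, min (a i) (b i) = 0) :
    (∀ i, 0 < c i → a i = 0) ∧ (∀ i, c i < 0 → (a i : ℤ) = t * (-c i)) ∧
      (∀ i, c i = 0 → a i = 0) := by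
  refine ⟨fun i hc => ?_, fun i hc => ?_, fun i hc => ?_⟩
  · have htc : 0 < t * c i := mul_pos ht hc
    have := hd i; have := hmin i
    omega
  · have htc : t * c i < 0 := mul_neg_of_pos_of_neg ht hc
    have h2 : t * (-c i) = -(t * c i) := by ring
    have := hd i; have := hmin i
    omega
  · have h2 : t * c i = 0 := by rw [hc]; ring
    have := hd i; have := hmin i
    omega

/-- if `R_w` contains two coprime monomials and `z ∈ M`, then
`dim R_{w+z} = dim R_w + dim R_z - 1`. -/
theorem dim_Rw_add (K : Type*) [Field K] {n : ℕ} (Δ E : Set (Fin n → ℝ))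
    (hΔ : IsNewtonPolyhedron Δ) (hE : IsLooseEdge Δ E)
    (c : Fin n → ℤ) (hprim : IsPrimitiveVec c) (hpar : ParallelTo E c)
    (ξ : Fin (n-1) → Fin n → ℕ) (horth : OrthSetup ξ c)
    (w z : Fin (n-1) → ℕ) (hz : Mset ξ c z)
    (hcop : ∃ a b : Fin n →₀ ℕ, a ≠ b ∧ wtF ξ a = w ∧ wtF ξ b = w ∧
      (∀ i, min (a i) (b i) = 0)) :
    Module.finrank K (Rw K ξ (w + z)) =
      Module.finrank K (Rw K ξ w) + Module.finrank K (Rw K ξ z) - 1 := by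
  classical
  obtain ⟨α, hαz, hM⟩ := hz
  have hker : ∀ u : Fin n → ℤ, (∀ j, ∑ i, (ξ j i : ℤ) * u i = 0) →
      ∃ k : ℤ, ∀ i, u i = k * c i :=
    ker_collinear ξ c horth.1 horth.2 hprim
  have hc0 : ∃ i, c i ≠ 0 := by
    by_contra h
    push_neg at h
    have h2 : (Finset.univ.gcd fun i => (c i).natAbs) = 0 :=
      Finset.gcd_eq_zero_iff.mpr (fun i _ => by simp [h i])
    have h3 : (Finset.univ.gcd fun i => (c i).natAbs) = 1 := hprim
    omega
  obtain ⟨⟨iP, hiP⟩, ⟨iN, hiN⟩⟩ := mixed_signs Δ E hΔ hE c hpar hc0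
  obtain ⟨a, b, hab, haw, hbw, hmin⟩ := hcop
  have hd0 : ∀ j, ∑ i, (ξ j i : ℤ) * ((b i : ℤ) - a i) = 0 := by
    intro j
    have h1 : ∑ i, (ξ j i : ℤ) * (b i : ℤ) = ∑ i, (ξ j i : ℤ) * (a i : ℤ) := by
      have ha := congrFun haw j
      have hb := congrFun hbw j
      have h2 : ((∑ i, ξ j i * b i : ℕ) : ℤ) = ((∑ i, ξ j i * a i : ℕ) : ℤ) := by
        exact_mod_cast hb.trans ha.symm
      push_cast at h2
      exact h2
    calc ∑ i, (ξ j i : ℤ) * ((b i : ℤ) - a i)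
        = (∑ i, (ξ j i : ℤ) * (b i : ℤ)) - ∑ i, (ξ j i : ℤ) * (a i : ℤ) := by
          rw [← Finset.sum_sub_distrib]; congr 1; ext i; ring
      _ = 0 := by rw [h1]; ring
  obtain ⟨t, htd⟩ := hker _ hd0
  have ht0 : t ≠ 0 := by
    rintro rfl
    apply hab
    ext i
    have := htd i
    rw [zero_mul] at this
    omega
  rcases ht0.lt_or_gt with hneg | hpos
  · -- t < 0 : use b as base point with -t
    have hd' : ∀ i, (a i : ℤ) - b i = (-t) * c i := by
      intro i
      have h1 := htd i
      have h2 : (-t) * c i = -(t * c i) := by ring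
      omega
    obtain ⟨h1, h2, h3⟩ := coprime_struct c b a (-t) (by omega) hd'
      (fun i => by rw [min_comm]; exact hmin i)
    exact core K ξ c hker horth.2 iP hiP iN hiN w z b (-t) (by omega) h1 h2 h3 hbw α hαz hM
  · -- 0 < t : use a as base point
    obtain ⟨h1, h2, h3⟩ := coprime_struct c a b t hpos htd hmin
    exact core K ξ c hker horth.2 iP hiP iN hiN w z a t (by omega) h1 h2 h3 haw α hαz hM
end

section
/- With the grading of K[x_1,…,x_n][y] associated to a descendant loose edge E and R'_w = R_w ∩ K[x_1,…,x_n]: for every w ∈ M, z ∈ ℤ_{≥0}^n, every nonzero monomial H ∈ R'_z, and every ψ ∈ R'_{w+z}, the quotient ψ/H lies in R'_w; in particular ψ/H is a monomial with nonnegative exponents when ψ is a monomial. -/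
open Finset

/-- `R'_w = R_w ∩ K[x_1,…,x_n]`: span of monomials of weight `w` not involving `y`. -/
noncomputable def Rw' (K : Type*) [Field K] {n : ℕ} (ξ : Fin n → Fin (n+1) → ℕ)
    (w : Fin n → ℕ) : Submodule K (MvPolynomial (Fin (n+1)) K) :=
  Submodule.span K {p | ∃ α : Fin (n+1) →₀ ℕ, wtF ξ α = w ∧ α (Fin.last n) = 0 ∧
    p = MvPolynomial.monomial α (1 : K)}

/-- A descendant direction: nonnegative in the `x`-coordinates and negative in `y`. -/
def DescendantDir {n : ℕ} (c : Fin (n+1) → ℤ) : Prop :=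
  (∀ i : Fin (n+1), (i : ℕ) < n → 0 ≤ c i) ∧ c (Fin.last n) < 0



lemma ker_span {n : ℕ} (c : Fin (n+1) → ℤ) (hclast : c (Fin.last n) ≠ 0)
    (ξ : Fin n → Fin (n+1) → ℕ)
    (hli : LinearIndependent ℝ (fun j => fun i => ((ξ j i : ℝ))))
    (horth : ∀ j, ∑ i, (ξ j i : ℤ) * c i = 0)
    (v : Fin (n+1) → ℝ) (hv : ∀ j, ∑ i, (ξ j i : ℝ) * v i = 0) :
    ∃ t : ℝ, ∀ i, v i = t * (c i : ℝ) := by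
  set cR : Fin (n+1) → ℝ := fun i => ((c i : ℝ)) with hcR
  set ξR : Fin n → Fin (n+1) → ℝ := fun j => fun i => ((ξ j i : ℝ)) with hξR
  have horthR : ∀ j, ∑ i, ξR j i * cR i = 0 := by
    intro j
    have := horth j
    simp only [hξR, hcR]
    exact_mod_cast this
  have hnot : cR ∉ Submodule.span ℝ (Set.range ξR) := by
    intro hmem
    obtain ⟨g, hg⟩ := (Submodule.mem_span_range_iff_exists_fun ℝ).mp hmem
    have hcRi : ∀ i, cR i = ∑ j, g j * ξR j i := by
      intro i
      have := congrFun hg i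
      simpa [Finset.sum_apply] using this.symm
    have hzero : ∑ i, cR i * cR i = 0 := by
      calc ∑ i, cR i * cR i = ∑ i, (∑ j, g j * ξR j i) * cR i := by
            refine Finset.sum_congr rfl fun i _ => ?_
            rw [← hcRi]
        _ = ∑ j, g j * ∑ i, ξR j i * cR i := by
            simp_rw [Finset.sum_mul, Finset.mul_sum]
            rw [Finset.sum_comm]
            exact Finset.sum_congr rfl fun j _ => Finset.sum_congr rfl fun i _ => by ring
        _ = 0 := by simp [horthR]
    have : ∀ i ∈ Finset.univ, cR i * cR i = 0 :=
      (Finset.sum_eq_zero_iff_of_nonneg (fun i _ => mul_self_nonneg _)).mp hzero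
    have hl := this (Fin.last n) (Finset.mem_univ _)
    have : cR (Fin.last n) = 0 := by nlinarith [sq_nonneg (cR (Fin.last n))]
    simp only [hcR] at this
    exact hclast (by exact_mod_cast this)
  have hsnoc : LinearIndependent ℝ (Fin.snoc ξR cR : Fin (n+1) → Fin (n+1) → ℝ) :=
    linearIndependent_fin_snoc.mpr ⟨hli, hnot⟩
  have htop : Submodule.span ℝ (Set.range (Fin.snoc ξR cR : Fin (n+1) → Fin (n+1) → ℝ)) = ⊤ :=
    hsnoc.span_eq_top_of_card_eq_finrank (by simp)
  have hvmem : v ∈ Submodule.span ℝ (Set.range (Fin.snoc ξR cR : Fin (n+1) → Fin (n+1) → ℝ)) := by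
    rw [htop]; trivial
  obtain ⟨g, hg⟩ := (Submodule.mem_span_range_iff_exists_fun ℝ).mp hvmem
  set b : ℝ := g (Fin.last n) with hb
  set u : Fin (n+1) → ℝ := fun i => v i - b * cR i with huu
  have hu : ∀ i, u i = ∑ j : Fin n, g j.castSucc * ξR j i := by
    intro i
    have h1 := congrFun hg i
    rw [Finset.sum_apply] at h1
    rw [Fin.sum_univ_castSucc] at h1
    simp only [Pi.smul_apply, smul_eq_mul, Fin.snoc_castSucc, Fin.snoc_last] at h1
    simp only [huu]
    linarith [h1]
  have hortu : ∀ j, ∑ i, ξR j i * u i = 0 := by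
    intro j
    have : ∑ i, ξR j i * u i = ∑ i, ξR j i * v i - b * ∑ i, ξR j i * cR i := by
      rw [Finset.mul_sum, ← Finset.sum_sub_distrib]
      refine Finset.sum_congr rfl fun i _ => ?_
      simp only [huu]; ring
    rw [this, hv j, horthR j]; ring
  have huzero : ∑ i, u i * u i = 0 := by
    calc ∑ i, u i * u i = ∑ i, (∑ j, g j.castSucc * ξR j i) * u i := by
          refine Finset.sum_congr rfl fun i _ => ?_
          rw [← hu]
      _ = ∑ j, g j.castSucc * ∑ i, ξR j i * u i := by
          simp_rw [Finset.sum_mul, Finset.mul_sum]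
          rw [Finset.sum_comm]
          exact Finset.sum_congr rfl fun j _ => Finset.sum_congr rfl fun i _ => by ring
      _ = 0 := by simp [hortu]
  have hu0 : ∀ i, u i = 0 := by
    intro i
    have := (Finset.sum_eq_zero_iff_of_nonneg (fun i _ => mul_self_nonneg (u i))).mp huzero i
      (Finset.mem_univ _)
    nlinarith [sq_nonneg (u i)]
  refine ⟨b, fun i => ?_⟩
  have := hu0 i
  simp only [huu] at this
  linarith

lemma exists_delta {n : ℕ} (c : Fin (n+1) → ℤ)
    (hdesc : (∀ i : Fin (n+1), (i : ℕ) < n → 0 ≤ c i) ∧ c (Fin.last n) < 0)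
    (ξ : Fin n → Fin (n+1) → ℕ)
    (hli : LinearIndependent ℝ (fun j => fun i => ((ξ j i : ℝ))))
    (horth : ∀ j, ∑ i, (ξ j i : ℤ) * c i = 0)
    (w z : Fin n → ℕ)
    (α' : Fin (n+1) → ℤ) (hα'w : ∀ j, ∑ i, (ξ j i : ℤ) * α' i = (w j : ℤ))
    (hα'pos : ∀ η : Fin (n+1) → ℝ, (∀ i, 0 ≤ η i) → (∑ i, η i * (c i : ℝ)) = 0 →
      0 ≤ ∑ i, η i * (α' i : ℝ))
    (α β : Fin (n+1) →₀ ℕ) (hα : wtF ξ α = z) (hαy : α (Fin.last n) = 0)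
    (hβ : wtF ξ β = w + z) (hβy : β (Fin.last n) = 0) :
    ∃ δ : Fin (n+1) →₀ ℕ, β = α + δ ∧ wtF ξ δ = w ∧ δ (Fin.last n) = 0 := by
  have hαj : ∀ j, ∑ i, (ξ j i : ℝ) * (α i : ℝ) = (z j : ℝ) := by
    intro j
    have := congrFun hα j
    simp only [wtF] at this
    exact_mod_cast this
  have hβj : ∀ j, ∑ i, (ξ j i : ℝ) * (β i : ℝ) = (w j : ℝ) + (z j : ℝ) := by
    intro j
    have := congrFun hβ j
    simp only [wtF, Pi.add_apply] at this
    exact_mod_cast this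
  have hα'j : ∀ j, ∑ i, (ξ j i : ℝ) * (α' i : ℝ) = (w j : ℝ) := by
    intro j
    exact_mod_cast hα'w j
  set v : Fin (n+1) → ℝ := fun i => (β i : ℝ) - (α i : ℝ) - (α' i : ℝ) with hvdef
  have hv : ∀ j, ∑ i, (ξ j i : ℝ) * v i = 0 := by
    intro j
    have : ∑ i, (ξ j i : ℝ) * v i
        = ∑ i, (ξ j i : ℝ) * (β i : ℝ) - ∑ i, (ξ j i : ℝ) * (α i : ℝ)
          - ∑ i, (ξ j i : ℝ) * (α' i : ℝ) := by
      rw [← Finset.sum_sub_distrib, ← Finset.sum_sub_distrib]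
      refine Finset.sum_congr rfl fun i _ => ?_
      simp only [hvdef]; ring
    rw [this, hαj, hβj, hα'j]; ring
  obtain ⟨t, ht⟩ := ker_span c (ne_of_lt hdesc.2) ξ hli horth v hv
  have hvlast : v (Fin.last n) = -(α' (Fin.last n) : ℝ) := by
    simp [hvdef, hαy, hβy]
  have htlast : t * (c (Fin.last n) : ℝ) = -(α' (Fin.last n) : ℝ) := by
    rw [← ht]; exact hvlast
  have hcl : (c (Fin.last n) : ℝ) < 0 := by exact_mod_cast hdesc.2
  have hcl0 : (c (Fin.last n) : ℝ) ≠ 0 := ne_of_lt hcl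
  have hle : ∀ i, α i ≤ β i := by
    intro i
    by_cases hil : i = Fin.last n
    · rw [hil, hαy]; exact Nat.zero_le _
    · have hi : (i : ℕ) < n := by
        have h1 := i.isLt
        have h2 : (i : ℕ) ≠ n := fun h => hil (Fin.ext (by simp [h, Fin.last]))
        omega
      have hci : (0:ℝ) ≤ (c i : ℝ) := by exact_mod_cast hdesc.1 i hi
      set d : ℝ := -(c i : ℝ) / (c (Fin.last n) : ℝ) with hd
      have hdnn : 0 ≤ d := div_nonneg_of_nonpos (by linarith) hcl.le
      have hdc : d * (c (Fin.last n) : ℝ) = -(c i : ℝ) := by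
        rw [hd]; exact div_mul_cancel₀ _ hcl0
      set η : Fin (n+1) → ℝ :=
        fun kk => (if kk = i then 1 else 0) + (if kk = Fin.last n then d else 0) with hη
      have hηnn : ∀ kk, 0 ≤ η kk := by
        intro kk
        simp only [hη]
        split_ifs <;> linarith
      have hsum : ∀ x : Fin (n+1) → ℝ,
          ∑ kk, η kk * x kk = x i + d * x (Fin.last n) := by
        intro x
        simp only [hη, add_mul, Finset.sum_add_distrib, ite_mul, one_mul, zero_mul,
          Finset.sum_ite_eq', Finset.mem_univ, if_true]
      have hηc : ∑ kk, η kk * (c kk : ℝ) = 0 := by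
        rw [hsum]; linarith
      have hpos := hα'pos η hηnn hηc
      rw [hsum] at hpos
      have h1 : (β i : ℝ) - α i - α' i = t * c i := ht i
      have h2 : t * (c i : ℝ) = d * (α' (Fin.last n) : ℝ) := by
        apply mul_right_cancel₀ hcl0
        have e1 : t * (c i : ℝ) * (c (Fin.last n) : ℝ)
            = -(α' (Fin.last n) : ℝ) * (c i : ℝ) := by
          calc t * (c i : ℝ) * (c (Fin.last n) : ℝ)
              = (t * (c (Fin.last n) : ℝ)) * (c i : ℝ) := by ring
            _ = -(α' (Fin.last n) : ℝ) * (c i : ℝ) := by rw [htlast]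
        have e2 : d * (α' (Fin.last n) : ℝ) * (c (Fin.last n) : ℝ)
            = -(c i : ℝ) * (α' (Fin.last n) : ℝ) := by
          calc d * (α' (Fin.last n) : ℝ) * (c (Fin.last n) : ℝ)
              = (d * (c (Fin.last n) : ℝ)) * (α' (Fin.last n) : ℝ) := by ring
            _ = -(c i : ℝ) * (α' (Fin.last n) : ℝ) := by rw [hdc]
        rw [e1, e2]; ring
      have hfin : (α i : ℝ) ≤ (β i : ℝ) := by
        rw [h2] at h1; linarith
      exact_mod_cast hfin
  have habs : α ≤ β := (Finsupp.le_iff α β).mpr fun i _ => hle i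
  have hadd : α + (β - α) = β := add_tsub_cancel_of_le habs
  refine ⟨β - α, hadd.symm, ?_, ?_⟩
  · funext j
    have hsplit : wtF ξ α j + wtF ξ (β - α) j = wtF ξ β j := by
      conv_rhs => rw [← hadd]
      simp only [wtF, Finsupp.add_apply, mul_add, Finset.sum_add_distrib]
    rw [hα, hβ] at hsplit
    simp only [Pi.add_apply] at hsplit
    omega
  · rw [Finsupp.tsub_apply, hβy, hαy]

/-- for `w ∈ M`, a nonzero monomial `H ∈ R'_z` divides every
`ψ ∈ R'_{w+z}`, with quotient in `R'_w`. -/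
theorem monomial_divides_Rw' (K : Type*) [Field K] {n : ℕ} (Δ E : Set (Fin (n+1) → ℝ))
    (hΔ : IsNewtonPolyhedron Δ) (hE : IsLooseEdge Δ E)
    (c : Fin (n+1) → ℤ) (hprim : IsPrimitiveVec c) (hpar : ParallelTo E c)
    (hdesc : DescendantDir c)
    (ξ : Fin n → Fin (n+1) → ℕ) (horth : OrthSetup ξ c)
    (w z : Fin n → ℕ) (hw : Mset ξ c w)
    (k : K) (hk : k ≠ 0) (α : Fin (n+1) →₀ ℕ)
    (hα : wtF ξ α = z) (hαy : α (Fin.last n) = 0) :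
    ∀ ψ ∈ Rw' K ξ (w + z), ∃ φ ∈ Rw' K ξ w,
      ψ = (MvPolynomial.monomial α k) * φ := by
  intro ψ hψ
  obtain ⟨α', hα'w, hα'pos⟩ := hw
  have key : Rw' K ξ (w + z) ≤
      Submodule.map (LinearMap.mulLeft K ((MvPolynomial.monomial α) k)) (Rw' K ξ w) := by
    apply Submodule.span_le.mpr
    rintro p ⟨β, hβ, hβy, rfl⟩
    obtain ⟨δ, hβeq, hδw, hδy⟩ := exists_delta c ⟨hdesc.1, hdesc.2⟩ ξ horth.1 horth.2
      w z α' hα'w hα'pos α β hα hαy hβ hβy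
    refine ⟨MvPolynomial.monomial δ (k⁻¹ : K), ?_, ?_⟩
    · have h1 : (MvPolynomial.monomial δ) (k⁻¹ : K)
          = k⁻¹ • MvPolynomial.monomial δ (1 : K) := by
        simp [MvPolynomial.smul_monomial]
      rw [h1]
      exact Submodule.smul_mem _ _ (Submodule.subset_span ⟨δ, hδw, hδy, rfl⟩)
    · simp only [LinearMap.mulLeft_apply, MvPolynomial.monomial_mul, hβeq,
        mul_inv_cancel₀ hk]
  obtain ⟨φ, hφ, hq⟩ := key hψ
  refine ⟨φ, hφ, ?_⟩
  simpa using hq.symm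
end

section
/- Let G ∈ R_w and H ∈ R_z be coprime homogeneous polynomials in the grading of K[x_1,…,x_n][y] associated to a descendant loose edge, with z ∈ M. If G is monic with respect to y (in the special case G = y and H ∈ R'_z), then for every i ∈ M one has G·R_{z+i} + H·R_{w+i} = R_{w+z+i}. -/
open Finset

/-- `G` is monic with respect to the last variable `y`. -/
def MonicInY {K : Type*} [CommSemiring K] {n : ℕ} (G : MvPolynomial (Fin (n+1)) K) : Prop :=
  ∃ d : ℕ, MvPolynomial.coeff (Finsupp.single (Fin.last n) d) G = 1 ∧
    ∀ α ∈ G.support, α (Fin.last n) ≤ d ∧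
      (α (Fin.last n) = d → α = Finsupp.single (Fin.last n) d)

section SurjAux

open MvPolynomial

variable {K : Type*} [Field K]

lemma wtF_add {N m : ℕ} (ξ : Fin m → Fin N → ℕ) (α β : Fin N →₀ ℕ) :
    wtF ξ (α + β) = wtF ξ α + wtF ξ β := by
  funext j
  simp [wtF, Finsupp.add_apply, Nat.mul_add, Finset.sum_add_distrib]

/-- The submodule of polynomials all of whose monomials have weight `w`. -/
noncomputable def RwS (K : Type*) [Field K] {N m : ℕ} (ξ : Fin m → Fin N → ℕ)
    (w : Fin m → ℕ) : Submodule K (MvPolynomial (Fin N) K) where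
  carrier := {p | ∀ α ∈ p.support, wtF ξ α = w}
  add_mem' := by
    intro a b ha hb α hα
    rcases Finset.mem_union.mp (Finsupp.support_add hα) with h | h
    · exact ha α h
    · exact hb α h
  zero_mem' := by intro α hα; simp at hα
  smul_mem' := by
    intro t a ha α hα
    exact ha α (Finsupp.support_smul hα)

lemma mem_Rw_iff {N m : ℕ} {ξ : Fin m → Fin N → ℕ} {w : Fin m → ℕ}
    {p : MvPolynomial (Fin N) K} :
    p ∈ Rw K ξ w ↔ ∀ α ∈ p.support, wtF ξ α = w := by
  classical
  constructor
  · intro hp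
    have hle : Rw K ξ w ≤ RwS K ξ w := by
      rw [Rw, Submodule.span_le]
      rintro q ⟨α, hα, rfl⟩
      intro β hβ
      rw [MvPolynomial.support_monomial] at hβ
      simp only [one_ne_zero, if_false] at hβ
      rcases Finset.mem_singleton.mp hβ with rfl
      exact hα
    exact hle hp
  · intro hp
    rw [p.as_sum]
    refine Submodule.sum_mem _ (fun α hα => ?_)
    have h1 : MvPolynomial.monomial α (MvPolynomial.coeff α p)
        = (MvPolynomial.coeff α p) • MvPolynomial.monomial α (1 : K) := by
      rw [MvPolynomial.smul_monomial, smul_eq_mul, mul_one]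
    rw [h1]
    exact Submodule.smul_mem _ _ (Submodule.subset_span ⟨α, hp α hα, rfl⟩)

lemma Rw_mul_mem {N m : ℕ} {ξ : Fin m → Fin N → ℕ} {v v' : Fin m → ℕ}
    {p q : MvPolynomial (Fin N) K} (hp : p ∈ Rw K ξ v) (hq : q ∈ Rw K ξ v') :
    p * q ∈ Rw K ξ (v + v') := by
  classical
  rw [mem_Rw_iff] at hp hq ⊢
  intro α hα
  have h := MvPolynomial.support_mul p q hα
  rcases Finset.mem_add.mp h with ⟨a, ha, b, hb, rfl⟩
  rw [wtF_add, hp a ha, hq b hb]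

lemma homog_factor {N m : ℕ} {ξ : Fin m → Fin N → ℕ}
    {z i : Fin m → ℕ} {H h : MvPolynomial (Fin N) K}
    (hHsupp : ∀ α ∈ H.support, wtF ξ α = z) (hH0 : H ≠ 0)
    (hHh : ∀ α ∈ (H * h).support, wtF ξ α = z + i) :
    ∀ α ∈ h.support, wtF ξ α = i := by
  classical
  intro α hα
  by_contra hvne
  set v := wtF ξ α with hvdef
  set hv : MvPolynomial (Fin N) K :=
    ∑ β ∈ h.support.filter (fun β => wtF ξ β = v), MvPolynomial.monomial β (MvPolynomial.coeff β h)
    with hhv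
  have coeff_hv : ∀ β, MvPolynomial.coeff β hv =
      if β ∈ h.support ∧ wtF ξ β = v then MvPolynomial.coeff β h else 0 := by
    intro β
    rw [hhv, MvPolynomial.coeff_sum]
    simp only [MvPolynomial.coeff_monomial]
    rw [Finset.sum_ite_eq' (h.support.filter (fun β => wtF ξ β = v)) β]
    by_cases hmem : β ∈ h.support ∧ wtF ξ β = v
    · rw [if_pos (Finset.mem_filter.mpr ⟨hmem.1, hmem.2⟩), if_pos hmem]
    · rw [if_neg (fun hc => hmem ⟨(Finset.mem_filter.mp hc).1, (Finset.mem_filter.mp hc).2⟩), if_neg hmem]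
  have hαhv : MvPolynomial.coeff α hv = MvPolynomial.coeff α h := by
    rw [coeff_hv]; simp [hα, hvdef]
  have hhv0 : hv ≠ 0 := by
    intro h0
    have := hαhv
    rw [h0] at this
    simp only [MvPolynomial.coeff_zero] at this
    exact (MvPolynomial.mem_support_iff.mp hα) this.symm
  have hsupphv : ∀ β ∈ hv.support, β ∈ h.support ∧ wtF ξ β = v := by
    intro β hβ
    have hne := MvPolynomial.mem_support_iff.mp hβ
    rw [coeff_hv] at hne
    by_contra hc
    rw [if_neg hc] at hne
    exact hne rfl
  -- pick γ in the support of H * hv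
  have hHhv0 : H * hv ≠ 0 := mul_ne_zero hH0 hhv0
  obtain ⟨γ, hγ⟩ := Finset.nonempty_iff_ne_empty.mpr
    (fun h0 => hHhv0 (MvPolynomial.support_eq_empty.mp h0))
  have hγwt : wtF ξ γ = z + v := by
    rcases Finset.mem_add.mp (MvPolynomial.support_mul H hv hγ) with ⟨a, ha, b, hb, rfl⟩
    rw [wtF_add, hHsupp a ha, (hsupphv b hb).2]
  -- the rest of h
  set h' := h - hv with hh'
  have hsupph' : ∀ β ∈ h'.support, wtF ξ β ≠ v := by
    intro β hβ hwtβ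
    have hcoeff : MvPolynomial.coeff β h' = 0 := by
      rw [hh', MvPolynomial.coeff_sub, coeff_hv]
      by_cases hmem : β ∈ h.support
      · simp [hmem, hwtβ]
      · have : MvPolynomial.coeff β h = 0 := MvPolynomial.notMem_support_iff.mp hmem
        simp [this, hmem]
    exact (MvPolynomial.mem_support_iff.mp hβ) hcoeff
  have hγh' : MvPolynomial.coeff γ (H * h') = 0 := by
    by_contra h0
    have hγ' := MvPolynomial.mem_support_iff.mpr h0
    rcases Finset.mem_add.mp (MvPolynomial.support_mul H h' hγ') with ⟨a, ha, b, hb, hab⟩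
    have h3 : wtF ξ (a + b) = wtF ξ γ := by rw [hab]
    rw [wtF_add, hHsupp a ha, hγwt] at h3
    exact hsupph' b hb (add_left_cancel h3)
  have hγHh : MvPolynomial.coeff γ (H * h) ≠ 0 := by
    have hsplit : H * h = H * hv + H * h' := by rw [hh']; ring
    rw [hsplit, MvPolynomial.coeff_add, hγh', add_zero]
    exact MvPolynomial.mem_support_iff.mp hγ
  have : wtF ξ γ = z + i := hHh γ (MvPolynomial.mem_support_iff.mpr hγHh)
  rw [hγwt] at this
  exact hvne (add_left_cancel this)

lemma X_dvd_of_support {N : ℕ} {p : MvPolynomial (Fin N) K} {s : Fin N}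
    (h : ∀ α ∈ p.support, α s ≠ 0) : MvPolynomial.X s ∣ p := by
  classical
  refine ⟨∑ α ∈ p.support, MvPolynomial.monomial (α - Finsupp.single s 1) (MvPolynomial.coeff α p), ?_⟩
  rw [Finset.mul_sum]
  conv_lhs => rw [p.as_sum]
  refine Finset.sum_congr rfl (fun α hα => ?_)
  rw [MvPolynomial.X, MvPolynomial.monomial_mul, one_mul]
  congr 1
  have hle : Finsupp.single s 1 ≤ α := by
    rw [Finsupp.single_le_iff]
    exact Nat.one_le_iff_ne_zero.mpr (h α hα)
  rw [add_tsub_cancel_of_le hle]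

end SurjAux
section SurjAuxB

open Finset

/-- If two integer vectors have the same `ξ`-weight, they differ by an integer
multiple of the primitive vector `c`. -/
lemma eq_add_smul_of_wt_eq {n : ℕ} {ξ : Fin n → Fin (n+1) → ℕ} {c : Fin (n+1) → ℤ}
    (horth : OrthSetup ξ c) (hprim : IsPrimitiveVec c) (hc0 : c (Fin.last n) ≠ 0)
    (β γ : Fin (n+1) → ℤ)
    (h : ∀ j, ∑ i, (ξ j i : ℤ) * β i = ∑ i, (ξ j i : ℤ) * γ i) :
    ∃ k : ℤ, ∀ i', γ i' = β i' + k * c i' := by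
  classical
  set E := EuclideanSpace ℝ (Fin (n+1))
  set v : E := WithLp.toLp 2 (fun i' => ((γ i' - β i' : ℤ) : ℝ)) with hv
  set ξR : Fin n → E := (fun j => WithLp.toLp 2 fun i' => ((ξ j i' : ℕ) : ℝ)) with hξR
  set cR : E := WithLp.toLp 2 (fun i' => ((c i' : ℤ) : ℝ)) with hcR
  have hinner : ∀ (x y : E), (inner ℝ x y : ℝ) = ∑ i', x i' * y i' := by
    intro x y
    rw [PiLp.inner_apply]
    simp [RCLike.inner_apply, mul_comm]
  have hcR0 : cR ≠ 0 := by
    intro h0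
    apply hc0
    have h1 : ((c (Fin.last n) : ℤ) : ℝ) = (0 : ℝ) := congrArg (fun x : E => x (Fin.last n)) h0
    exact_mod_cast h1
  -- the span of the ξ's is the orthogonal complement of c
  have hli : LinearIndependent ℝ ξR :=
    horth.1.map' (WithLp.linearEquiv 2 ℝ (Fin (n+1) → ℝ)).symm.toLinearMap (LinearEquiv.ker _)
  set W : Submodule ℝ E := Submodule.span ℝ (Set.range ξR) with hW
  have hWrank : Module.finrank ℝ W = n := by
    rw [hW, finrank_span_eq_card hli, Fintype.card_fin]
  have hle : W ≤ (ℝ ∙ cR)ᗮ := by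
    rw [hW, Submodule.span_le]
    rintro x ⟨j, rfl⟩
    rw [SetLike.mem_coe, Submodule.mem_orthogonal_singleton_iff_inner_left, hinner]
    have : ∑ i', (ξ j i' : ℝ) * (c i' : ℝ) = ((∑ i', (ξ j i' : ℤ) * c i' : ℤ) : ℝ) := by
      push_cast; rfl
    rw [hξR]
    simp only []
    rw [this, horth.2 j]
    simp
  have horthrank : Module.finrank ℝ ((ℝ ∙ cR)ᗮ : Submodule ℝ E) = n := by
    have h1 := Submodule.finrank_add_finrank_orthogonal (K := (ℝ ∙ cR))
    rw [finrank_span_singleton hcR0] at h1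
    have h2 : Module.finrank ℝ E = n + 1 := finrank_euclideanSpace_fin
    omega
  have hWeq : W = (ℝ ∙ cR)ᗮ :=
    Submodule.eq_of_le_of_finrank_le hle (by rw [hWrank, horthrank])
  -- v is orthogonal to W
  have hvW : v ∈ Wᗮ := by
    rw [Submodule.mem_orthogonal]
    intro u hu
    induction hu using Submodule.span_induction with
    | mem x hx =>
        rcases hx with ⟨j, rfl⟩
        rw [hinner]
        have : ∑ i', (ξ j i' : ℝ) * ((γ i' - β i' : ℤ) : ℝ)
            = ((∑ i', (ξ j i' : ℤ) * (γ i' - β i') : ℤ) : ℝ) := by push_cast; rfl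
        rw [hξR]; simp only []
        rw [this]
        have : ∑ i', (ξ j i' : ℤ) * (γ i' - β i') = 0 := by
          have := h j
          simp only [mul_sub]
          rw [Finset.sum_sub_distrib]
          omega
        rw [this]; simp
    | zero => simp
    | add x y _ _ hx hy => rw [inner_add_left, hx, hy, add_zero]
    | smul t x _ hx => rw [inner_smul_left, hx, mul_zero]
  rw [hWeq, Submodule.orthogonal_orthogonal] at hvW
  rcases Submodule.mem_span_singleton.mp hvW with ⟨t, ht⟩
  -- cross relations over ℤ
  have hcross : ∀ i i', (γ i - β i) * c i' = (γ i' - β i') * c i := by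
    intro i i'
    have hi : ((γ i - β i : ℤ) : ℝ) = t * (c i : ℝ) := by
      have := congrArg (fun x : E => x i) ht
      exact this.symm
    have hi' : ((γ i' - β i' : ℤ) : ℝ) = t * (c i' : ℝ) := by
      have := congrArg (fun x : E => x i') ht
      exact this.symm
    have : ((γ i - β i : ℤ) : ℝ) * (c i' : ℝ) = ((γ i' - β i' : ℤ) : ℝ) * (c i : ℝ) := by
      rw [hi, hi']; ring
    exact_mod_cast this
  -- Bezout via principality of the ideal generated by the c i
  set I : Ideal ℤ := Ideal.span (Set.range c) with hI
  have hItop : I = ⊤ := by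
    obtain ⟨g, hg⟩ : Submodule.IsPrincipal I := inferInstance
    have hgdvd : ∀ i, g ∣ c i := by
      intro i
      have hci : c i ∈ I := Ideal.subset_span ⟨i, rfl⟩
      rw [hg] at hci
      exact Ideal.mem_span_singleton.mp hci
    have : g.natAbs ∣ Finset.univ.gcd (fun i => (c i).natAbs) :=
      Finset.dvd_gcd (fun i _ => Int.natAbs_dvd_natAbs.mpr (hgdvd i))
    rw [hprim] at this
    have hunit : IsUnit g := Int.isUnit_iff_natAbs_eq.mpr (Nat.dvd_one.mp this)
    rw [hg]
    exact Ideal.span_singleton_eq_top.mpr hunit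
  have h1I : (1 : ℤ) ∈ I := by rw [hItop]; trivial
  rw [hI] at h1I
  rcases (Submodule.mem_span_range_iff_exists_fun ℤ).mp h1I with ⟨lam, hlam⟩
  refine ⟨∑ i, lam i * (γ i - β i), fun i' => ?_⟩
  have : (∑ i, lam i * (γ i - β i)) * c i' = γ i' - β i' := by
    rw [Finset.sum_mul]
    calc ∑ i, lam i * (γ i - β i) * c i'
        = ∑ i, lam i * ((γ i' - β i') * c i) := by
          refine Finset.sum_congr rfl (fun i _ => ?_)
          rw [mul_assoc, hcross i i']
      _ = (γ i' - β i') * ∑ i, lam i * c i := by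
          rw [Finset.mul_sum]
          refine Finset.sum_congr rfl (fun i _ => ?_)
          ring
      _ = γ i' - β i' := by
          have : ∑ i, lam i * c i = 1 := by
            simpa [smul_eq_mul] using hlam
          rw [this, mul_one]
  omega

end SurjAuxB
section SurjAuxC

open Finset MvPolynomial

variable {K : Type*} [Field K]

/-- The dimension of a weight space, computed from any integer point `β` on the
corresponding affine line. -/
lemma finrank_Rw_eq {n : ℕ} {ξ : Fin n → Fin (n+1) → ℕ} {c : Fin (n+1) → ℤ}
    (horth : OrthSetup ξ c) (hprim : IsPrimitiveVec c) (hdesc : DescendantDir c)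
    (hP : ((Finset.univ : Finset (Fin (n+1))).filter (fun j => 0 < c j)).Nonempty)
    (v : Fin n → ℕ) (β : Fin (n+1) → ℤ)
    (hβv : ∀ j, ∑ i, (ξ j i : ℤ) * β i = (v j : ℤ))
    (hβZ : ∀ i, c i = 0 → 0 ≤ β i) :
    FiniteDimensional K (Rw K ξ v) ∧
    Module.finrank K (Rw K ξ v) =
      ((β (Fin.last n)) / (-(c (Fin.last n))) + 1
        - ((Finset.univ : Finset (Fin (n+1))).filter (fun j => 0 < c j)).sup' hP
            (fun j => -(β j / c j))).toNat := by
  classical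
  set e : ℤ := -(c (Fin.last n)) with he_def
  have he : 0 < e := by
    have := hdesc.2
    omega
  have hclast : c (Fin.last n) ≠ 0 := by omega
  set P := ((Finset.univ : Finset (Fin (n+1))).filter (fun j => 0 < c j)) with hPdef
  set ℓ : ℤ := P.sup' hP (fun j => -(β j / c j)) with hℓ
  set u : ℤ := (β (Fin.last n)) / e with hu
  -- any index with negative `c` is the last one
  have hneg_last : ∀ i : Fin (n+1), c i < 0 → i = Fin.last n := by
    intro i hi
    have h1 := hdesc.1 i
    have h2 : ¬ ((i : ℕ) < n) := fun hlt => by omega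
    have h3 : (i : ℕ) = n := by
      have := i.isLt
      omega
    exact Fin.ext h3
  set κ : ℤ → (Fin (n+1) →₀ ℕ) :=
    fun k => Finsupp.equivFunOnFinite.symm (fun i => (β i + k * c i).toNat) with hκ
  have hκapp : ∀ k i, κ k i = (β i + k * c i).toNat := by
    intro k i
    rw [hκ]
    rfl
  have hpos : ∀ k ∈ Finset.Icc ℓ u, ∀ i, 0 ≤ β i + k * c i := by
    intro k hk i
    rcases Finset.mem_Icc.mp hk with ⟨hk1, hk2⟩
    rcases lt_trichotomy (c i) 0 with hci | hci | hci
    · have hil : i = Fin.last n := hneg_last i hci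
      rw [hil]
      have hkc : k * e ≤ β (Fin.last n) := (Int.le_ediv_iff_mul_le he).mp hk2
      have h2 : k * c (Fin.last n) = -(k * e) := by rw [he_def]; ring
      omega
    · have := hβZ i hci
      rw [hci]
      omega
    · have hiP : i ∈ P := by
        rw [hPdef]
        simp [hci]
      have h1a : -(β i / c i) ≤ ℓ := Finset.le_sup' (fun j => -(β j / c j)) hiP
      have h1 : -(β i / c i) ≤ k := le_trans h1a hk1
      have h2 : -k ≤ β i / c i := by omega
      have h3 : -k * c i ≤ β i := (Int.le_ediv_iff_mul_le hci).mp h2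
      nlinarith
  have hκcast : ∀ k, (∀ i, 0 ≤ β i + k * c i) → ∀ i, ((κ k i : ℕ) : ℤ) = β i + k * c i := by
    intro k hk i
    rw [hκapp]
    exact Int.toNat_of_nonneg (hk i)
  have hκwt : ∀ k ∈ Finset.Icc ℓ u, wtF ξ (κ k) = v := by
    intro k hk
    funext j
    have h1 : ((wtF ξ (κ k) j : ℕ) : ℤ) = ∑ i, (ξ j i : ℤ) * (β i + k * c i) := by
      rw [wtF]
      push_cast
      exact Finset.sum_congr rfl (fun i _ => by rw [hκcast k (hpos k hk) i])
    have h2 : ∑ i, (ξ j i : ℤ) * (β i + k * c i) = (v j : ℤ) := by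
      have : ∑ i, (ξ j i : ℤ) * (β i + k * c i)
          = (∑ i, (ξ j i : ℤ) * β i) + k * ∑ i, (ξ j i : ℤ) * c i := by
        rw [Finset.mul_sum, ← Finset.sum_add_distrib]
        exact Finset.sum_congr rfl (fun i _ => by ring)
      rw [this, hβv j, horth.2 j]
      ring
    have := h1.trans h2
    exact_mod_cast this
  have hκinj : ∀ k ∈ Finset.Icc ℓ u, ∀ k' ∈ Finset.Icc ℓ u, κ k = κ k' → k = k' := by
    intro k hk k' hk' hkk
    have h1 : ((κ k (Fin.last n) : ℕ) : ℤ) = ((κ k' (Fin.last n) : ℕ) : ℤ) := by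
      rw [hkk]
    rw [hκcast k (hpos k hk) _, hκcast k' (hpos k' hk') _] at h1
    have : k * c (Fin.last n) = k' * c (Fin.last n) := by omega
    exact mul_right_cancel₀ hclast this
  have hfib : ∀ α : Fin (n+1) →₀ ℕ, wtF ξ α = v → ∃ k ∈ Finset.Icc ℓ u, κ k = α := by
    intro α hα
    have hwt : ∀ j, ∑ i, (ξ j i : ℤ) * β i = ∑ i, (ξ j i : ℤ) * ((α i : ℕ) : ℤ) := by
      intro j
      rw [hβv j]
      have : ((wtF ξ α j : ℕ) : ℤ) = ∑ i, (ξ j i : ℤ) * ((α i : ℕ) : ℤ) := by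
        rw [wtF]; push_cast; rfl
      rw [← this, hα]
    obtain ⟨k, hk⟩ := eq_add_smul_of_wt_eq horth hprim hclast β (fun i => ((α i : ℕ) : ℤ)) hwt
    have hkIcc : k ∈ Finset.Icc ℓ u := by
      rw [Finset.mem_Icc]
      constructor
      · rw [hℓ]
        apply Finset.sup'_le
        intro j hjP
        have hcj : 0 < c j := by
          rw [hPdef] at hjP
          simpa using hjP
        have h0 : (0 : ℤ) ≤ β j + k * c j := by
          rw [← hk j]
          positivity
        have : -k * c j ≤ β j := by nlinarith
        have := (Int.le_ediv_iff_mul_le hcj).mpr this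
        omega
      · have h0 : (0 : ℤ) ≤ β (Fin.last n) + k * c (Fin.last n) := by
          rw [← hk (Fin.last n)]
          positivity
        have hce : k * e = -(k * c (Fin.last n)) := by rw [he_def]; ring
        have : k * e ≤ β (Fin.last n) := by omega
        exact (Int.le_ediv_iff_mul_le he).mpr this
    refine ⟨k, hkIcc, ?_⟩
    ext i
    have := hk i
    rw [hκapp]
    omega
  -- rewrite the generating set
  have hset : {p : MvPolynomial (Fin (n+1)) K | ∃ α : Fin (n+1) →₀ ℕ, wtF ξ α = v
        ∧ p = MvPolynomial.monomial α (1 : K)}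
      = Set.range (fun k : (Finset.Icc ℓ u : Finset ℤ) =>
          MvPolynomial.monomial (κ (k : ℤ)) (1 : K)) := by
    ext p
    constructor
    · rintro ⟨α, hα, rfl⟩
      obtain ⟨k, hk, rfl⟩ := hfib α hα
      exact ⟨⟨k, hk⟩, rfl⟩
    · rintro ⟨⟨k, hk⟩, rfl⟩
      exact ⟨κ k, hκwt k hk, rfl⟩
  have hli : LinearIndependent K (fun k : (Finset.Icc ℓ u : Finset ℤ) =>
      MvPolynomial.monomial (κ (k : ℤ)) (1 : K)) := by
    have hb := (MvPolynomial.basisMonomials (Fin (n+1)) K).linearIndependent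
    have hcomp : (fun k : (Finset.Icc ℓ u : Finset ℤ) =>
        MvPolynomial.monomial (κ (k : ℤ)) (1 : K))
        = (MvPolynomial.basisMonomials (Fin (n+1)) K)
          ∘ (fun k : (Finset.Icc ℓ u : Finset ℤ) => κ (k : ℤ)) := by
      funext k
      rw [Function.comp_apply]
      exact (congrFun (MvPolynomial.coe_basisMonomials (Fin (n+1)) K) (κ (k : ℤ))).symm
    rw [hcomp]
    apply hb.comp
    rintro ⟨k, hk⟩ ⟨k', hk'⟩ hkk
    exact Subtype.ext (hκinj k hk k' hk' hkk)
  have : Rw K ξ v = Submodule.span K (Set.range (fun k : (Finset.Icc ℓ u : Finset ℤ) =>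
      MvPolynomial.monomial (κ (k : ℤ)) (1 : K))) := by
    rw [Rw, hset]
  constructor
  · rw [this]
    exact FiniteDimensional.span_of_finite K (Set.finite_range _)
  · rw [this, finrank_span_eq_card hli, Fintype.card_coe, Int.card_Icc]

end SurjAuxC
section SurjAuxD

open Finset

/-- From the loose-edge geometry: some coordinate of `c` other than the last is positive. -/
lemma exists_pos_coord {n : ℕ} {Δ E : Set (Fin (n+1) → ℝ)} {c : Fin (n+1) → ℤ}
    (hΔ : IsNewtonPolyhedron Δ) (hE : IsLooseEdge Δ E) (hpar : ParallelTo E c)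
    (hdesc : DescendantDir c) :
    ((Finset.univ : Finset (Fin (n+1))).filter (fun j => 0 < c j)).Nonempty := by
  classical
  by_contra hne
  have hczero : ∀ j : Fin (n+1), (j : ℕ) < n → c j = 0 := by
    intro j hj
    have h1 := hdesc.1 j hj
    have h2 : ¬ (0 < c j) := by
      intro h0
      exact hne ⟨j, Finset.mem_filter.mpr ⟨Finset.mem_univ j, h0⟩⟩
    omega
  obtain ⟨⟨ξ₀, hξ₀nn, hEface⟩, hcpt, _, _⟩ := hE
  obtain ⟨a, b, hab, hEseg, t, hbc⟩ := hpar
  have haE : a ∈ E := by rw [hEseg]; exact left_mem_segment ℝ a b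
  have hbE : b ∈ E := by rw [hEseg]; exact right_mem_segment ℝ a b
  have haF : a ∈ NPface Δ ξ₀ := hEface ▸ haE
  have hbF : b ∈ NPface Δ ξ₀ := hEface ▸ hbE
  obtain ⟨haΔ, hamin⟩ := haF
  obtain ⟨hbΔ, hbmin⟩ := hbF
  have hdoteq : dotp ξ₀ a = dotp ξ₀ b := le_antisymm (hamin b hbΔ) (hbmin a haΔ)
  have ht0 : t ≠ 0 := by
    intro h0
    apply hab
    have : b - a = 0 := by rw [hbc, h0, zero_smul]
    funext i
    have := congrFun this i
    simp only [Pi.sub_apply, Pi.zero_apply] at this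
    linarith
  have hdiff : dotp ξ₀ b - dotp ξ₀ a = t * (ξ₀ (Fin.last n) * (c (Fin.last n) : ℝ)) := by
    have h1 : dotp ξ₀ b - dotp ξ₀ a = ∑ i, ξ₀ i * (b i - a i) := by
      rw [dotp, dotp, ← Finset.sum_sub_distrib]
      exact Finset.sum_congr rfl (fun i _ => by ring)
    rw [h1]
    have h2 : ∀ i, ξ₀ i * (b i - a i) = ξ₀ i * (t * (c i : ℝ)) := by
      intro i
      have := congrFun hbc i
      simp only [Pi.sub_apply, Pi.smul_apply, smul_eq_mul] at this
      rw [this]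
    rw [Finset.sum_congr rfl (fun i _ => h2 i)]
    rw [Fin.sum_univ_castSucc]
    have h3 : ∀ i : Fin n, ξ₀ i.castSucc * (t * ((c i.castSucc : ℤ) : ℝ)) = 0 := by
      intro i
      have : c i.castSucc = 0 := hczero i.castSucc (by simp)
      rw [this]
      simp
    rw [Finset.sum_congr rfl (fun i _ => h3 i)]
    simp
    ring
  have hξ₀last : ξ₀ (Fin.last n) = 0 := by
    rw [hdoteq] at hdiff
    simp only [sub_self] at hdiff
    have hclast : ((c (Fin.last n) : ℤ) : ℝ) ≠ 0 := by
      have := hdesc.2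
      simp only [ne_eq, Int.cast_eq_zero]
      omega
    rcases mul_eq_zero.mp hdiff.symm with h | h
    · exact absurd h ht0
    · rcases mul_eq_zero.mp h with h' | h'
      · exact h'
      · exact absurd h' hclast
  -- build an unbounded ray inside E
  obtain ⟨S, _, _, hΔeq⟩ := hΔ
  have haΔ' := haΔ
  rw [hΔeq] at haΔ'
  obtain ⟨y, hy, zz, hzz, ha⟩ := haΔ'
  set eL : Fin (n+1) → ℝ := fun i => if i = Fin.last n then (1:ℝ) else 0 with heL
  have hray : ∀ s : ℝ, 0 ≤ s → (a + s • eL) ∈ E := by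
    intro s hs
    have hmem : (a + s • eL) ∈ Δ := by
      rw [hΔeq]
      refine ⟨y, hy, zz + s • eL, ?_, ?_⟩
      · intro i
        have h1 := hzz i
        have h2 : 0 ≤ s * eL i := by
          apply mul_nonneg hs
          rw [heL]
          dsimp only
          split <;> norm_num
        simpa using add_nonneg h1 h2
      · rw [ha]; funext i; simp; ring
    have hdot : dotp ξ₀ (a + s • eL) = dotp ξ₀ a := by
      rw [dotp, dotp]
      have : ∀ i, ξ₀ i * (a + s • eL) i = ξ₀ i * a i + s * (ξ₀ i * eL i) := by
        intro i; simp; ring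
      rw [Finset.sum_congr rfl (fun i _ => this i), Finset.sum_add_distrib]
      have : ∀ i, s * (ξ₀ i * eL i) = 0 := by
        intro i
        rw [heL]
        dsimp only
        by_cases hi : i = Fin.last n
        · rw [if_pos hi, hi, hξ₀last]; ring
        · rw [if_neg hi]; ring
      rw [Finset.sum_congr rfl (fun i _ => this i)]
      simp
    have : (a + s • eL) ∈ NPface Δ ξ₀ := by
      refine ⟨hmem, fun b' hb' => ?_⟩
      rw [hdot]
      exact hamin b' hb'
    rw [hEface]
    exact this
  obtain ⟨R, hR⟩ := isBounded_iff_forall_norm_le.mp hcpt.isBounded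
  set s : ℝ := |R| + |a (Fin.last n)| + 1 with hs
  have hs0 : 0 ≤ s := by positivity
  have hmem := hray s hs0
  have h1 : ‖a + s • eL‖ ≤ R := hR _ hmem
  have h2 : |(a + s • eL) (Fin.last n)| ≤ ‖a + s • eL‖ := by
    have := norm_le_pi_norm (a + s • eL) (Fin.last n)
    simpa using this
  have h3 : (a + s • eL) (Fin.last n) = a (Fin.last n) + s := by
    simp [heL]
  rw [h3] at h2
  have h4 : |a (Fin.last n) + s| ≤ R := le_trans h2 h1
  have h5 : a (Fin.last n) + s ≤ |a (Fin.last n) + s| := le_abs_self _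
  have h6 : -|a (Fin.last n)| ≤ a (Fin.last n) := neg_abs_le _
  have h7 : R ≤ |R| := le_abs_self R
  rw [hs] at h5
  linarith

end SurjAuxD
section SurjAuxE

open Finset

/-- Extract integer data from membership in `M`. -/
lemma Mset_props {n : ℕ} {ξ : Fin n → Fin (n+1) → ℕ} {c : Fin (n+1) → ℤ}
    (hdesc : DescendantDir c) {v : Fin n → ℕ} (hv : Mset ξ c v) :
    ∃ β : Fin (n+1) → ℤ, (∀ j, ∑ i, (ξ j i : ℤ) * β i = (v j : ℤ)) ∧
      (∀ i, c i = 0 → 0 ≤ β i) ∧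
      (∀ j, 0 < c j → 0 ≤ (-(c (Fin.last n))) * β j + c j * β (Fin.last n)) := by
  classical
  obtain ⟨α, hwt, hdual⟩ := hv
  refine ⟨α, hwt, ?_, ?_⟩
  · intro i hci
    set η : Fin (n+1) → ℝ := fun i' => if i' = i then 1 else 0 with hη
    have h1 : ∀ x : Fin (n+1) → ℝ, ∑ i', η i' * x i' = x i := by
      intro x
      rw [hη]
      simp only [ite_mul, one_mul, zero_mul]
      rw [Finset.sum_ite_eq' Finset.univ i x]
      simp
    have h2 := hdual η (fun i' => by rw [hη]; dsimp only; split <;> norm_num)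
      (by rw [h1 (fun i' => (c i' : ℝ))]; exact_mod_cast hci)
    rw [h1] at h2
    exact_mod_cast h2
  · intro j hcj
    set e : ℤ := -(c (Fin.last n)) with he_def
    have he : 0 < e := by have := hdesc.2; omega
    have hjlast : j ≠ Fin.last n := by
      intro h0
      rw [h0] at hcj
      have := hdesc.2
      omega
    set η : Fin (n+1) → ℝ := fun i' =>
      (e : ℝ) * (if i' = j then 1 else 0) + (c j : ℝ) * (if i' = Fin.last n then 1 else 0)
      with hη
    have h1 : ∀ x : Fin (n+1) → ℝ, ∑ i', η i' * x i' = (e : ℝ) * x j + (c j : ℝ) * x (Fin.last n) := by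
      intro x
      rw [hη]
      have : ∀ i', ((e : ℝ) * (if i' = j then 1 else 0)
            + (c j : ℝ) * (if i' = Fin.last n then 1 else 0)) * x i'
          = (e : ℝ) * ((if i' = j then 1 else 0) * x i')
            + (c j : ℝ) * ((if i' = Fin.last n then 1 else 0) * x i') := by
        intro i'; ring
      rw [Finset.sum_congr rfl (fun i' _ => this i'), Finset.sum_add_distrib,
        ← Finset.mul_sum, ← Finset.mul_sum]
      simp only [ite_mul, one_mul, zero_mul]
      rw [Finset.sum_ite_eq' Finset.univ j x, Finset.sum_ite_eq' Finset.univ (Fin.last n) x]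
      simp
    have hηnn : ∀ i', 0 ≤ η i' := by
      intro i'
      rw [hη]
      dsimp only
      have h1e : (0:ℝ) ≤ (e:ℝ) := by exact_mod_cast le_of_lt he
      have h1c : (0:ℝ) ≤ (c j : ℝ) := by exact_mod_cast le_of_lt hcj
      split <;> split <;> simp <;> positivity
    have hηc : ∑ i', η i' * (c i' : ℝ) = 0 := by
      rw [h1 (fun i' => (c i' : ℝ))]
      have : ((c (Fin.last n) : ℤ) : ℝ) = -(e : ℝ) := by
        rw [he_def]; push_cast; ring
      rw [this]
      ring
    have h2 := hdual η hηnn hηc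
    rw [h1] at h2
    have : (0:ℝ) ≤ ((e * α j + c j * α (Fin.last n) : ℤ) : ℝ) := by
      push_cast
      linarith
    have h3 : (0:ℤ) ≤ e * α j + c j * α (Fin.last n) := by exact_mod_cast this
    rw [he_def] at h3
    exact h3

/-- Feasibility bound: the lower end of the fiber interval is at most one past the
upper end. -/
lemma lb_bound {e cj bj bl : ℤ} (he : 0 < e) (hcj : 0 < cj)
    (hsl : 0 ≤ e * bj + cj * bl) : -(bj / cj) ≤ bl / e + 1 := by
  set u : ℤ := bl / e with hu
  have hlt : bl < (u + 1) * e := by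
    have := Int.lt_ediv_add_one_mul_self bl he
    rw [hu]
    exact this
  have h1 : e * bj > e * (-(cj * (u + 1))) := by nlinarith
  have h2 : bj > -(cj * (u + 1)) := by
    have := (mul_lt_mul_iff_right₀ he).mp h1
    exact this
  have h3 : -(u + 1) * cj ≤ bj := by nlinarith
  have h4 : -(u + 1) ≤ bj / cj := (Int.le_ediv_iff_mul_le hcj).mpr h3
  omega

end SurjAuxE
section SurjAuxF

open Finset MvPolynomial

variable {K : Type*} [Field K]

/-- A polynomial that is monic in `y` and a unit must be `1`. -/
lemma monic_unit_eq_one {n : ℕ} {G : MvPolynomial (Fin (n+1)) K}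
    (hmonic : MonicInY G) (hu : IsUnit G) : G = 1 := by
  classical
  obtain ⟨d, hd1, hdsupp⟩ := hmonic
  have hdmem : Finsupp.single (Fin.last n) d ∈ G.support := by
    rw [MvPolynomial.mem_support_iff, hd1]
    exact one_ne_zero
  -- evaluate, sending all variables except the last one to 1
  set f : Fin (n+1) → Polynomial K := fun i => if i = Fin.last n then Polynomial.X else 1 with hf
  set φ : MvPolynomial (Fin (n+1)) K →ₐ[K] Polynomial K := MvPolynomial.aeval f with hφ
  have hφmon : ∀ (α : Fin (n+1) →₀ ℕ) (r : K),
      φ (MvPolynomial.monomial α r) = Polynomial.C r * Polynomial.X ^ (α (Fin.last n)) := by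
    intro α r
    rw [hφ, MvPolynomial.aeval_monomial]
    congr 1
    have h1 : (α.prod fun i k => f i ^ k)
        = α.prod fun i k => if Fin.last n = i then Polynomial.X ^ k else 1 := by
      apply Finsupp.prod_congr
      intro i _
      rw [hf]
      dsimp only
      by_cases hi : i = Fin.last n
      · rw [if_pos hi, if_pos hi.symm]
      · rw [if_neg hi, if_neg (fun h => hi h.symm), one_pow]
    rw [h1, Finsupp.prod_ite_eq]
    split
    · rfl
    · next h =>
      have : α (Fin.last n) = 0 := Finsupp.notMem_support_iff.mp h
      rw [this, pow_zero]
  have hcoeffd : (φ G).coeff d = 1 := by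
    conv_lhs => rw [G.as_sum]
    rw [map_sum]
    have : ∀ α ∈ G.support, (φ (MvPolynomial.monomial α (MvPolynomial.coeff α G))).coeff d
        = if α = Finsupp.single (Fin.last n) d then MvPolynomial.coeff α G else 0 := by
      intro α hα
      rw [hφmon]
      rw [Polynomial.coeff_C_mul, Polynomial.coeff_X_pow]
      by_cases hαd : α = Finsupp.single (Fin.last n) d
      · rw [if_pos hαd, if_pos]
        · rw [mul_one]
        · rw [hαd]; simp
      · rw [if_neg hαd, if_neg, mul_zero]
        intro h0
        exact hαd ((hdsupp α hα).2 h0.symm)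
    rw [Polynomial.finset_sum_coeff, Finset.sum_congr rfl this, Finset.sum_ite_eq' _ _]
    rw [if_pos hdmem, hd1]
  obtain ⟨r, _, hr⟩ := Polynomial.isUnit_iff.mp (hu.map φ)
  have hd0 : d = 0 := by
    by_contra hd0
    rw [← hr, Polynomial.coeff_C, if_neg hd0] at hcoeffd
    exact one_ne_zero hcoeffd.symm
  -- now the support of G is {0}
  have hsupp0 : G.support ⊆ {0} := by
    intro α hα
    have h1 := (hdsupp α hα).1
    have h2 : α (Fin.last n) = d := by omega
    have h3 := (hdsupp α hα).2 h2
    rw [Finset.mem_singleton, h3, hd0, Finsupp.single_zero]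
  have : G = MvPolynomial.monomial 0 (MvPolynomial.coeff 0 G) := by
    conv_lhs => rw [G.as_sum]
    rcases Finset.subset_singleton_iff.mp hsupp0 with h | h
    · rw [h] at hdmem
      exact absurd hdmem (Finset.notMem_empty _)
    · rw [h, Finset.sum_singleton]
  rw [this]
  have hc0 : MvPolynomial.coeff 0 G = 1 := by
    rw [← hd1, hd0, Finsupp.single_zero]
  rw [hc0]
  rfl

end SurjAuxF
/-- if `G ∈ R_w`, `H ∈ R_z` are coprime, `z ∈ M`, and `G` is monic in
`y`, then `G·R_{z+i} + H·R_{w+i} = R_{w+z+i}` for every `i ∈ M`. -/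

theorem surjectivity_monic (K : Type*) [Field K] {n : ℕ} (Δ E : Set (Fin (n+1) → ℝ))
    (hΔ : IsNewtonPolyhedron Δ) (hE : IsLooseEdge Δ E)
    (c : Fin (n+1) → ℤ) (hprim : IsPrimitiveVec c) (hpar : ParallelTo E c)
    (hdesc : DescendantDir c)
    (ξ : Fin n → Fin (n+1) → ℕ) (horth : OrthSetup ξ c)
    (w z : Fin n → ℕ) (hz : Mset ξ c z)
    (G H : MvPolynomial (Fin (n+1)) K) (hG : G ∈ Rw K ξ w) (hH : H ∈ Rw K ξ z)
    (hcop : RelPrime G H) (hmonic : MonicInY G) :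
    ∀ i : Fin n → ℕ, Mset ξ c i →
      (Rw K ξ (z + i)).map (LinearMap.mulLeft K G) ⊔
        (Rw K ξ (w + i)).map (LinearMap.mulLeft K H) = Rw K ξ (w + z + i) := by
  classical
  intro i hi
  by_cases hGu : IsUnit G
  · -- `G` is a unit, hence `G = 1` and `w = 0`.
    have hG1 : G = 1 := monic_unit_eq_one hmonic hGu
    subst hG1
    have hw0 : w = 0 := by
      have h0 : (0 : Fin (n+1) →₀ ℕ) ∈ (1 : MvPolynomial (Fin (n+1)) K).support := by
        rw [MvPolynomial.mem_support_iff]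
        simp
      have h1 := mem_Rw_iff.mp hG 0 h0
      rw [← h1]
      funext j
      simp [wtF]
    subst hw0
    have hzi : (0 : Fin n → ℕ) + z + i = z + i := by funext j; simp
    have h0i : (0 : Fin n → ℕ) + i = i := by funext j; simp
    rw [hzi, h0i]
    have hmap1 : (Rw K ξ (z+i)).map
        (LinearMap.mulLeft K (1 : MvPolynomial (Fin (n+1)) K)) = Rw K ξ (z+i) := by
      rw [LinearMap.mulLeft_one]
      exact Submodule.map_id _
    rw [hmap1]
    refine le_antisymm (sup_le le_rfl ?_) le_sup_left
    rintro x ⟨ψ, hψ, rfl⟩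
    show H * ψ ∈ Rw K ξ (z + i)
    exact Rw_mul_mem hH hψ
  · -- main case
    obtain ⟨d, hd1, hdsupp⟩ := hmonic
    have hGne : G ≠ 0 := by
      intro h0
      rw [h0] at hd1
      simp at hd1
    have hHne : H ≠ 0 := by
      intro h0
      exact hGu (hcop G dvd_rfl (by rw [h0]; exact dvd_zero G))
    have hP := exists_pos_coord hΔ hE hpar hdesc
    set e : ℤ := -(c (Fin.last n)) with he_def
    have he : 0 < e := by have := hdesc.2; omega
    have hclast : c (Fin.last n) ≠ 0 := by omega
    have hGsupp : ∀ α ∈ G.support, wtF ξ α = w := mem_Rw_iff.mp hG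
    have hHsupp : ∀ α ∈ H.support, wtF ξ α = z := mem_Rw_iff.mp hH
    have hdmem : Finsupp.single (Fin.last n) d ∈ G.support := by
      rw [MvPolynomial.mem_support_iff, hd1]
      exact one_ne_zero
    have hwd : wtF ξ (Finsupp.single (Fin.last n) d) = w := hGsupp _ hdmem
    -- integer base points
    set βw : Fin (n+1) → ℤ := fun i' => if i' = Fin.last n then (d : ℤ) else 0 with hβw_def
    have hβw_wt : ∀ j, ∑ i', (ξ j i' : ℤ) * βw i' = (w j : ℤ) := by
      intro j
      have h1 : ∑ i', (ξ j i' : ℤ) * βw i'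
          = ∑ i', (if i' = Fin.last n then (ξ j i' : ℤ) * d else 0) := by
        refine Finset.sum_congr rfl (fun i' _ => ?_)
        rw [hβw_def]
        dsimp only
        split <;> simp
      rw [h1, Finset.sum_ite_eq' Finset.univ (Fin.last n) (fun i' => (ξ j i' : ℤ) * d),
        if_pos (Finset.mem_univ _)]
      have h2 : (w j : ℤ) = ((wtF ξ (Finsupp.single (Fin.last n) d) j : ℕ) : ℤ) := by
        rw [hwd]
      rw [h2, wtF]
      push_cast
      have h3 : ∑ i', (ξ j i' : ℤ) * ((Finsupp.single (Fin.last n) d) i' : ℤ)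
          = ∑ i', (if Fin.last n = i' then (ξ j i' : ℤ) * d else 0) := by
        refine Finset.sum_congr rfl (fun i' _ => ?_)
        rw [Finsupp.single_apply]
        split <;> simp
      rw [h3, Finset.sum_ite_eq Finset.univ (Fin.last n) (fun i' => (ξ j i' : ℤ) * d),
        if_pos (Finset.mem_univ _)]
    have hβw_nn : ∀ i', 0 ≤ βw i' := by
      intro i'
      rw [hβw_def]
      dsimp only
      split
      · positivity
      · exact le_refl 0
    have hβw_P : ∀ j, 0 < c j → βw j = 0 := by
      intro j hcj
      rw [hβw_def]
      dsimp only
      rw [if_neg]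
      intro h0
      rw [h0] at hcj
      omega
    obtain ⟨βz, hβz_wt, hβz_Z, hβz_sl⟩ := Mset_props hdesc hz
    obtain ⟨βi, hβi_wt, hβi_Z, hβi_sl⟩ := Mset_props hdesc hi
    -- weights of sums
    have hsum2 : ∀ (g h' : Fin (n+1) → ℤ) (j : Fin n),
        ∑ i', (ξ j i' : ℤ) * (g i' + h' i')
          = (∑ i', (ξ j i' : ℤ) * g i') + ∑ i', (ξ j i' : ℤ) * h' i' := by
      intro g h' j
      rw [← Finset.sum_add_distrib]
      exact Finset.sum_congr rfl (fun i' _ => by ring)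
    have hβ1_wt : ∀ j, ∑ i', (ξ j i' : ℤ) * (βz i' + βi i') = (((z + i) j : ℕ) : ℤ) := by
      intro j
      rw [hsum2, hβz_wt j, hβi_wt j]
      have : (z + i) j = z j + i j := rfl
      rw [this]
      push_cast
      ring
    have hβ2_wt : ∀ j, ∑ i', (ξ j i' : ℤ) * (βw i' + βi i') = (((w + i) j : ℕ) : ℤ) := by
      intro j
      rw [hsum2, hβw_wt j, hβi_wt j]
      have : (w + i) j = w j + i j := rfl
      rw [this]
      push_cast
      ring
    have hβ3_wt : ∀ j, ∑ i', (ξ j i' : ℤ) * (βw i' + (βz i' + βi i'))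
        = (((w + z + i) j : ℕ) : ℤ) := by
      intro j
      rw [hsum2, hβw_wt j, hsum2, hβz_wt j, hβi_wt j]
      have : (w + z + i) j = w j + z j + i j := rfl
      rw [this]
      push_cast
      ring
    have hβ1_Z : ∀ i', c i' = 0 → 0 ≤ βz i' + βi i' := by
      intro i' h0
      have := hβz_Z i' h0
      have := hβi_Z i' h0
      omega
    have hβ2_Z : ∀ i', c i' = 0 → 0 ≤ βw i' + βi i' := by
      intro i' h0
      have := hβw_nn i'
      have := hβi_Z i' h0
      omega
    have hβ3_Z : ∀ i', c i' = 0 → 0 ≤ βw i' + (βz i' + βi i') := by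
      intro i' h0
      have := hβw_nn i'
      have := hβz_Z i' h0
      have := hβi_Z i' h0
      omega
    -- the four dimension computations
    obtain ⟨hFD1, hc1⟩ := finrank_Rw_eq (K := K) horth hprim hdesc hP (z + i)
      (fun i' => βz i' + βi i') hβ1_wt hβ1_Z
    obtain ⟨hFD2, hc2⟩ := finrank_Rw_eq (K := K) horth hprim hdesc hP (w + i)
      (fun i' => βw i' + βi i') hβ2_wt hβ2_Z
    obtain ⟨hFD3, hc3⟩ := finrank_Rw_eq (K := K) horth hprim hdesc hP (w + z + i)
      (fun i' => βw i' + (βz i' + βi i')) hβ3_wt hβ3_Z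
    obtain ⟨hFD4, hc4⟩ := finrank_Rw_eq (K := K) horth hprim hdesc hP i βi hβi_wt hβi_Z

    rw [← he_def] at hc1 hc2 hc3 hc4
    set Lz : ℤ := βz (Fin.last n) with hLz_def
    set Li : ℤ := βi (Fin.last n) with hLi_def
    set ℓA : ℤ := ((Finset.univ : Finset (Fin (n+1))).filter (fun j => 0 < c j)).sup' hP
      (fun j => -((βz j + βi j) / c j)) with hℓA_def
    set ℓB : ℤ := ((Finset.univ : Finset (Fin (n+1))).filter (fun j => 0 < c j)).sup' hP
      (fun j => -(βi j / c j)) with hℓB_def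
    have hβwlast : βw (Fin.last n) = (d : ℤ) := by rw [hβw_def]; simp
    -- normalize the four sup' expressions
    have hsupB2 : ((Finset.univ : Finset (Fin (n+1))).filter (fun j => 0 < c j)).sup' hP
        (fun j => -((βw j + βi j) / c j)) = ℓB := by
      rw [hℓB_def]
      refine Finset.sup'_congr hP rfl (fun j hj => ?_)
      have hcj : 0 < c j := (Finset.mem_filter.mp hj).2
      rw [hβw_P j hcj, zero_add]
    have hsupA3 : ((Finset.univ : Finset (Fin (n+1))).filter (fun j => 0 < c j)).sup' hP
        (fun j => -((βw j + (βz j + βi j)) / c j)) = ℓA := by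
      rw [hℓA_def]
      refine Finset.sup'_congr hP rfl (fun j hj => ?_)
      have hcj : 0 < c j := (Finset.mem_filter.mp hj).2
      rw [hβw_P j hcj, zero_add]
    rw [hsupB2, hβwlast] at hc2
    rw [hsupA3, hβwlast] at hc3
    -- the four integer counts
    set A1 : ℤ := (Lz + Li) / e + 1 - ℓA with hA1_def
    set A2 : ℤ := ((d : ℤ) + Li) / e + 1 - ℓB with hA2_def
    set A3 : ℤ := ((d : ℤ) + (Lz + Li)) / e + 1 - ℓA with hA3_def
    set A4 : ℤ := Li / e + 1 - ℓB with hA4_def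
    -- nonnegativity of the counts
    have hslz : ∀ j, 0 < c j → 0 ≤ e * βz j + c j * Lz := by
      intro j hcj
      have := hβz_sl j hcj
      rw [← he_def] at this
      exact this
    have hsli : ∀ j, 0 < c j → 0 ≤ e * βi j + c j * Li := by
      intro j hcj
      have := hβi_sl j hcj
      rw [← he_def] at this
      exact this
    have hA1nn : 0 ≤ A1 := by
      rw [hA1_def]
      have h1 : ℓA ≤ (Lz + Li) / e + 1 := by
        rw [hℓA_def]
        apply Finset.sup'_le
        intro j hj
        have hcj : 0 < c j := (Finset.mem_filter.mp hj).2
        apply lb_bound he hcj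
        have h2 := hslz j hcj
        have h3 := hsli j hcj
        have h4 : e * (βz j + βi j) + c j * (Lz + Li)
            = (e * βz j + c j * Lz) + (e * βi j + c j * Li) := by ring
        omega
      omega
    have hA4nn : 0 ≤ A4 := by
      rw [hA4_def]
      have h1 : ℓB ≤ Li / e + 1 := by
        rw [hℓB_def]
        apply Finset.sup'_le
        intro j hj
        have hcj : 0 < c j := (Finset.mem_filter.mp hj).2
        exact lb_bound he hcj (hsli j hcj)
      omega
    have hdnn : (0 : ℤ) ≤ (d : ℤ) := Int.natCast_nonneg d
    have hA2nn : 0 ≤ A2 := by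
      rw [hA2_def]
      have h1 : ℓB ≤ ((d : ℤ) + Li) / e + 1 := by
        rw [hℓB_def]
        apply Finset.sup'_le
        intro j hj
        have hcj : 0 < c j := (Finset.mem_filter.mp hj).2
        apply lb_bound he hcj
        have h2 := hsli j hcj
        have h3 : 0 ≤ c j * (d : ℤ) := mul_nonneg (le_of_lt hcj) hdnn
        have h4 : e * βi j + c j * ((d : ℤ) + Li)
            = (e * βi j + c j * Li) + c j * (d : ℤ) := by ring
        omega
      omega
    have hA3nn : 0 ≤ A3 := by
      rw [hA3_def]
      have h1 : ℓA ≤ ((d : ℤ) + (Lz + Li)) / e + 1 := by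
        rw [hℓA_def]
        apply Finset.sup'_le
        intro j hj
        have hcj : 0 < c j := (Finset.mem_filter.mp hj).2
        apply lb_bound he hcj
        have h2 := hslz j hcj
        have h3 := hsli j hcj
        have h5 : 0 ≤ c j * (d : ℤ) := mul_nonneg (le_of_lt hcj) hdnn
        have h4 : e * (βz j + βi j) + c j * ((d : ℤ) + (Lz + Li))
            = (e * βz j + c j * Lz) + (e * βi j + c j * Li) + c j * (d : ℤ) := by ring
        omega
      omega
    -- the coprimality dichotomy : e ∣ d or e ∣ Lz
    have hXnu : ¬ IsUnit (MvPolynomial.X (Fin.last n) : MvPolynomial (Fin (n+1)) K) := by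
      intro hu
      have h1 := hu.map (MvPolynomial.eval (fun _ => (0 : K)))
      rw [MvPolynomial.eval_X] at h1
      have h2 : (0 : K) = 1 := isUnit_zero_iff.mp h1
      exact one_ne_zero h2.symm
    have hnboth : ¬ ((MvPolynomial.X (Fin.last n) : MvPolynomial (Fin (n+1)) K) ∣ G
        ∧ (MvPolynomial.X (Fin.last n) : MvPolynomial (Fin (n+1)) K) ∣ H) := by
      rintro ⟨h1, h2⟩
      exact hXnu (hcop _ h1 h2)
    have hcases : (∃ α ∈ G.support, α (Fin.last n) = 0)
        ∨ (∃ α ∈ H.support, α (Fin.last n) = 0) := by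
      by_contra hcon
      push_neg at hcon
      exact hnboth ⟨X_dvd_of_support hcon.1, X_dvd_of_support hcon.2⟩
    have hwt_int : ∀ (p : MvPolynomial (Fin (n+1)) K) (α : Fin (n+1) →₀ ℕ) (j : Fin n),
        ((wtF ξ α j : ℕ) : ℤ) = ∑ i', (ξ j i' : ℤ) * ((α i' : ℕ) : ℤ) := by
      intro p α j
      rw [wtF]
      push_cast
      rfl
    have key : A3 + A4 = A1 + A2 := by
      rcases hcases with ⟨α, hα, hα0⟩ | ⟨α, hα, hα0⟩
      · -- `e` divides `d`
        have hwtα : ∀ j, ∑ i', (ξ j i' : ℤ) * βw i'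
            = ∑ i', (ξ j i' : ℤ) * ((α i' : ℕ) : ℤ) := by
          intro j
          rw [hβw_wt j, ← hwt_int G α j, hGsupp α hα]
        obtain ⟨k, hk⟩ := eq_add_smul_of_wt_eq horth hprim hclast βw
          (fun i' => ((α i' : ℕ) : ℤ)) hwtα
        have hlast := hk (Fin.last n)
        rw [hβwlast] at hlast
        have hα0' : ((α (Fin.last n) : ℕ) : ℤ) = 0 := by rw [hα0]; rfl
        have hke : k * e = -(k * c (Fin.last n)) := by rw [he_def]; ring
        have hdm : (d : ℤ) = k * e := by omega
        have h1 : ((d : ℤ) + Li) / e = Li / e + k := by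
          rw [hdm, add_comm, Int.add_mul_ediv_right Li k (ne_of_gt he)]
        have h2 : ((d : ℤ) + (Lz + Li)) / e = (Lz + Li) / e + k := by
          rw [hdm, add_comm, Int.add_mul_ediv_right (Lz + Li) k (ne_of_gt he)]
        rw [hA1_def, hA2_def, hA3_def, hA4_def, h1, h2]
        ring
      · -- `e` divides `Lz`
        have hwtα : ∀ j, ∑ i', (ξ j i' : ℤ) * βz i'
            = ∑ i', (ξ j i' : ℤ) * ((α i' : ℕ) : ℤ) := by
          intro j
          rw [hβz_wt j, ← hwt_int H α j, hHsupp α hα]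
        obtain ⟨k, hk⟩ := eq_add_smul_of_wt_eq horth hprim hclast βz
          (fun i' => ((α i' : ℕ) : ℤ)) hwtα
        have hlast := hk (Fin.last n)
        rw [← hLz_def] at hlast
        have hα0' : ((α (Fin.last n) : ℕ) : ℤ) = 0 := by rw [hα0]; rfl
        have hke : k * e = -(k * c (Fin.last n)) := by rw [he_def]; ring
        have hdm : Lz = k * e := by omega
        have h1 : (Lz + Li) / e = Li / e + k := by
          rw [hdm, add_comm, Int.add_mul_ediv_right Li k (ne_of_gt he)]
        have h2 : ((d : ℤ) + (Lz + Li)) / e = ((d : ℤ) + Li) / e + k := by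
          have : (d : ℤ) + (Lz + Li) = ((d : ℤ) + Li) + k * e := by rw [hdm]; ring
          rw [this, Int.add_mul_ediv_right ((d : ℤ) + Li) k (ne_of_gt he)]
        rw [hA1_def, hA2_def, hA3_def, hA4_def, h1, h2]
        ring
    -- linear algebra: ranks of the two maps and their intersection
    have hGinj : Function.Injective (LinearMap.mulLeft K G) := by
      intro a b hab
      have h1 : G * a = G * b := hab
      exact mul_left_cancel₀ hGne h1
    have hHinj : Function.Injective (LinearMap.mulLeft K H) := by
      intro a b hab
      have h1 : H * a = H * b := hab
      exact mul_left_cancel₀ hHne h1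
    have hGHne : G * H ≠ 0 := mul_ne_zero hGne hHne
    have hGHinj : Function.Injective (LinearMap.mulLeft K (G * H)) := by
      intro a b hab
      have h1 : (G * H) * a = (G * H) * b := hab
      exact mul_left_cancel₀ hGHne h1
    haveI := hFD1
    haveI := hFD2
    haveI := hFD3
    haveI := hFD4
    set U := (Rw K ξ (z + i)).map (LinearMap.mulLeft K G) with hU_def
    set V := (Rw K ξ (w + i)).map (LinearMap.mulLeft K H) with hV_def
    have eU := Submodule.equivMapOfInjective (LinearMap.mulLeft K G) hGinj (Rw K ξ (z + i))
    have eV := Submodule.equivMapOfInjective (LinearMap.mulLeft K H) hHinj (Rw K ξ (w + i))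
    have eW := Submodule.equivMapOfInjective (LinearMap.mulLeft K (G * H)) hGHinj (Rw K ξ i)
    haveI : FiniteDimensional K U := Module.Finite.equiv eU
    haveI : FiniteDimensional K V := Module.Finite.equiv eV
    have hrankU : Module.finrank K U = Module.finrank K (Rw K ξ (z + i)) :=
      (LinearEquiv.finrank_eq eU).symm
    have hrankV : Module.finrank K V = Module.finrank K (Rw K ξ (w + i)) :=
      (LinearEquiv.finrank_eq eV).symm
    have hrankW : Module.finrank K ((Rw K ξ i).map (LinearMap.mulLeft K (G * H)))
        = Module.finrank K (Rw K ξ i) := (LinearEquiv.finrank_eq eW).symm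
    -- the intersection is (G*H) · R_i
    have hinf : U ⊓ V = (Rw K ξ i).map (LinearMap.mulLeft K (G * H)) := by
      apply le_antisymm
      · rintro x hx
        obtain ⟨hxU, hxV⟩ := Submodule.mem_inf.mp hx
        obtain ⟨φ, hφ, hφx⟩ := Submodule.mem_map.mp hxU
        obtain ⟨ψ, hψ, hψx⟩ := Submodule.mem_map.mp hxV
        have h1 : G * φ = x := hφx
        have h2 : H * ψ = x := hψx
        have hHdvd : H ∣ G * φ := ⟨ψ, by rw [h1, ← h2]⟩
        have hrel : IsRelPrime H G := fun u hu1 hu2 => hcop u hu2 hu1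
        obtain ⟨h, rfl⟩ := hrel.dvd_of_dvd_mul_left hHdvd
        have hh : h ∈ Rw K ξ i :=
          mem_Rw_iff.mpr (homog_factor hHsupp hHne (mem_Rw_iff.mp hφ))
        refine Submodule.mem_map.mpr ⟨h, hh, ?_⟩
        show (G * H) * h = x
        rw [← h1]
        ring
      · rintro x hx
        obtain ⟨h, hh, hhx⟩ := Submodule.mem_map.mp hx
        have h1 : (G * H) * h = x := hhx
        rw [Submodule.mem_inf]
        constructor
        · refine Submodule.mem_map.mpr ⟨H * h, Rw_mul_mem hH hh, ?_⟩
          show G * (H * h) = x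
          rw [← h1]; ring
        · refine Submodule.mem_map.mpr ⟨G * h, Rw_mul_mem hG hh, ?_⟩
          show H * (G * h) = x
          rw [← h1]; ring
    -- the sup is contained in the target
    have hle : U ⊔ V ≤ Rw K ξ (w + z + i) := by
      refine sup_le ?_ ?_
      · rintro x hx
        obtain ⟨φ, hφ, hφx⟩ := Submodule.mem_map.mp hx
        have h1 : G * φ = x := hφx
        rw [← h1]
        have h2 := Rw_mul_mem hG hφ
        rwa [← add_assoc] at h2
      · rintro x hx
        obtain ⟨ψ, hψ, hψx⟩ := Submodule.mem_map.mp hx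
        have h1 : H * ψ = x := hψx
        rw [← h1]
        have h2 := Rw_mul_mem hH hψ
        have heq : z + (w + i) = w + z + i := by rw [← add_assoc, add_comm z w]
        rwa [heq] at h2
    -- rank computation
    refine Submodule.eq_of_le_of_finrank_le hle ?_
    have hsum := Submodule.finrank_sup_add_finrank_inf_eq U V
    rw [hinf, hrankW, hrankU, hrankV, hc1, hc2, hc4] at hsum
    rw [hc3]
    have hnat : A3.toNat + A4.toNat = A1.toNat + A2.toNat := by
      have hcast : ((A3.toNat + A4.toNat : ℕ) : ℤ) = ((A1.toNat + A2.toNat : ℕ) : ℤ) := by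
        push_cast
        rw [Int.toNat_of_nonneg hA3nn, Int.toNat_of_nonneg hA4nn,
          Int.toNat_of_nonneg hA1nn, Int.toNat_of_nonneg hA2nn]
        exact key
      exact_mod_cast hcast
    omega
end
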